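/- arXiv:0805.4472 — 3 statements merged into one kernel-verified Lean document; each statement's English description precedes it below -/
import Mathlib

section
/- For every t ∈ ℝ and every T > 0, lim_{σ→∞} Σ_{i∈ℤ} p_i(t,t+T) = λT. -/
open MeasureTheory Filter Set

private lemma tiling_iUnion (a h : ℝ) (hh : 0 < h) :
    (⋃ i : ℤ, Ioc (a + i * h) (a + i * h + h)) = univ := by
  ext y
  simp only [mem_iUnion, mem_univ, iff_true, mem_Ioc]
  refine ⟨⌈(y - a) / h⌉ - 1, ?_, ?_⟩
  · have h1 : ((⌈(y - a) / h⌉ : ℝ) - 1) < (y - a) / h := by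
      have := Int.ceil_lt_add_one ((y - a) / h)
      linarith
    have h2 := mul_lt_mul_of_pos_right h1 hh
    rw [div_mul_cancel₀ _ hh.ne'] at h2
    push_cast
    linarith
  · have h1 : (y - a) / h ≤ (⌈(y - a) / h⌉ : ℝ) := Int.le_ceil _
    have h2 := mul_le_mul_of_nonneg_right h1 hh.le
    rw [div_mul_cancel₀ _ hh.ne'] at h2
    push_cast
    linarith

private lemma cells_disjoint (a h c : ℝ) (hc : 0 ≤ c) (hch : c ≤ h) :
    Pairwise (Function.onFun Disjoint fun i : ℤ => Ioc (a + i * h) (a + i * h + c)) := by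
  have key : ∀ i j : ℤ, i < j →
      Disjoint (Ioc (a + i * h) (a + i * h + c)) (Ioc (a + j * h) (a + j * h + c)) := by
    intro i j hij
    rw [Set.Ioc_disjoint_Ioc]
    have h0 : 0 ≤ h := hc.trans hch
    have hij' : (i : ℝ) + 1 ≤ j := by exact_mod_cast hij
    have : a + i * h + c ≤ a + j * h := by nlinarith
    calc min (a + i * h + c) (a + j * h + c) ≤ a + i * h + c := min_le_left _ _
      _ ≤ a + j * h := this
      _ ≤ max (a + i * h) (a + j * h) := le_max_right _ _
  intro i j hij
  rcases hij.lt_or_gt with h' | h'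
  · exact key _ _ h'
  · exact (key _ _ h').symm

private lemma hasSum_cells {g : ℝ → ℝ} (hg : Integrable g) (a h c : ℝ)
    (hc : 0 ≤ c) (hch : c ≤ h) :
    HasSum (fun i : ℤ => ∫ y in Ioc (a + i * h) (a + i * h + c), g y)
      (∫ y in ⋃ i : ℤ, Ioc (a + i * h) (a + i * h + c), g y) :=
  hasSum_integral_iUnion (fun _ => measurableSet_Ioc) (cells_disjoint a h c hc hch)
    hg.integrableOn

private lemma hasSum_cells_full {g : ℝ → ℝ} (hg : Integrable g) (a h : ℝ) (hh : 0 < h) :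
    HasSum (fun i : ℤ => ∫ y in Ioc (a + i * h) (a + i * h + h), g y) (∫ y, g y) := by
  have := hasSum_cells hg a h h hh.le le_rfl
  rwa [tiling_iUnion a h hh, setIntegral_univ] at this

private lemma stepA {f : ℝ → ℝ} (hf_int : Integrable f) (hf_prob : ∫ x, f x = 1)
    (a h c : ℝ) (hh : 0 < h) (hc : 0 ≤ c) (hch : c ≤ h) (n : ℕ) :
    HasSum (fun i : ℤ => ∫ y in Ioc (a + i * h) (a + i * h + ((n : ℝ) * h + c)), f y)
      ((n : ℝ) + ∫ y in ⋃ i : ℤ, Ioc (a + i * h) (a + i * h + c), f y) := by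
  induction n with
  | zero => simpa using hasSum_cells hf_int a h c hc hch
  | succ n ih =>
    have hsplit : ∀ i : ℤ,
        (∫ y in Ioc (a + i * h) (a + i * h + (((n : ℕ) + 1 : ℕ) * h + c)), f y)
        = (∫ y in Ioc (a + i * h) (a + i * h + h), f y)
          + ∫ y in Ioc (a + (i + 1 : ℤ) * h) (a + (i + 1 : ℤ) * h + ((n : ℝ) * h + c)), f y := by
      intro i
      push_cast
      have hnc : 0 ≤ (n : ℝ) * h + c := add_nonneg (mul_nonneg (Nat.cast_nonneg n) hh.le) hc
      have hunion : Ioc (a + i * h) (a + i * h + h)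
          ∪ Ioc (a + i * h + h) (a + i * h + h + ((n : ℝ) * h + c))
          = Ioc (a + i * h) (a + i * h + h + ((n : ℝ) * h + c)) := by
        apply Set.Ioc_union_Ioc_eq_Ioc
        · linarith
        · linarith
      rw [show a + (i : ℝ) * h + (((n : ℝ) + 1) * h + c)
          = a + (i : ℝ) * h + h + ((n : ℝ) * h + c) by ring, ← hunion, setIntegral_union
        (Set.Ioc_disjoint_Ioc.mpr ((min_le_left _ _).trans (le_max_right _ _)))
        measurableSet_Ioc hf_int.integrableOn hf_int.integrableOn,
        show a + ((i : ℝ) + 1) * h = a + (i : ℝ) * h + h from by ring]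
    have H1 := hasSum_cells_full hf_int a h hh
    rw [hf_prob] at H1
    have H2 : HasSum
        (fun i : ℤ => ∫ y in Ioc (a + (i + 1 : ℤ) * h) (a + (i + 1 : ℤ) * h + ((n : ℝ) * h + c)), f y)
        ((n : ℝ) + ∫ y in ⋃ i : ℤ, Ioc (a + i * h) (a + i * h + c), f y) := by
      exact ((Equiv.addRight (1 : ℤ)).hasSum_iff).mpr ih
    have H := H1.add H2
    have hfe : (fun i : ℤ => ∫ y in Ioc (a + i * h) (a + i * h + (((n : ℕ) + 1 : ℕ) * h + c)), f y)
        = fun i : ℤ => (∫ y in Ioc (a + i * h) (a + i * h + h), f y)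
          + ∫ y in Ioc (a + (i + 1 : ℤ) * h) (a + (i + 1 : ℤ) * h + ((n : ℝ) * h + c)), f y := by
      funext i; exact hsplit i
    rw [show (((n : ℕ) + 1 : ℕ) : ℝ) + (∫ y in ⋃ i : ℤ, Ioc (a + i * h) (a + i * h + c), f y)
        = 1 + ((n : ℝ) + ∫ y in ⋃ i : ℤ, Ioc (a + i * h) (a + i * h + c), f y) by push_cast; ring]
    rw [show ((n : ℕ) + 1 : ℕ) = n + 1 from rfl] at hfe
    rw [hfe]
    exact H

private lemma key_estimate {f : ℝ → ℝ} (hf_cont : Continuous f) (hf_nonneg : ∀ x, 0 ≤ f x)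
    (hf_int : Integrable f) (hf_prob : ∫ x, f x = 1)
    {θ : ℝ} (hθ0 : 0 ≤ θ) (hθ1 : θ ≤ 1) {ε : ℝ} (hε : 0 < ε) :
    ∃ δ : ℝ, 0 < δ ∧ ∀ a h : ℝ, 0 < h → h ≤ δ →
      |(∑' i : ℤ, ∫ y in Ioc (a + i * h) (a + i * h + θ * h), f y) - θ| ≤ ε := by
  -- choose R with small tail
  obtain ⟨R, hR1, hRint⟩ : ∃ R : ℝ, 1 ≤ R ∧ 1 - ε / 8 ≤ ∫ x in (-R)..R, f x := by
    have htend : Tendsto (fun r : ℝ => ∫ x in (-r)..r, f x) atTop (nhds 1) := by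
      have := intervalIntegral_tendsto_integral hf_int
        (tendsto_neg_atBot_iff.mpr (tendsto_id (α := ℝ))) (tendsto_id (α := ℝ))
      rwa [hf_prob] at this
    have hev := (htend.eventually (eventually_ge_nhds (show 1 - ε / 8 < 1 by linarith))).and
      (eventually_ge_atTop (1 : ℝ))
    obtain ⟨R, h1, h2⟩ := hev.exists
    exact ⟨R, h2, h1⟩
  set Tail : Set ℝ := (Ioc (-R) R)ᶜ with hTail_def
  have hTailmeas : MeasurableSet Tail := measurableSet_Ioc.compl
  have hTail : ∫ y in Tail, f y ≤ ε / 8 := by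
    have hsplit : (∫ y in Ioc (-R) R, f y) + ∫ y in Tail, f y = 1 := by
      rw [integral_add_compl measurableSet_Ioc hf_int, hf_prob]
    have heq : ∫ x in (-R)..R, f x = ∫ y in Ioc (-R) R, f y :=
      intervalIntegral.integral_of_le (by linarith)
    rw [heq] at hRint
    linarith
  set K : Set ℝ := Icc (-(R + 2)) (R + 2) with hK_def
  have hKmeas : MeasurableSet K := measurableSet_Icc
  have hKfin : volume K < ⊤ := by
    rw [hK_def, Real.volume_Icc]
    exact ENNReal.ofReal_lt_top
  have hvolK : (volume K).toReal = 2 * R + 4 := by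
    rw [hK_def, Real.volume_Icc, ENNReal.toReal_ofReal (by linarith)]
    ring
  set ε' : ℝ := ε / (2 * (2 * R + 4)) with hε'_def
  have hε' : 0 < ε' := div_pos hε (by linarith)
  -- uniform continuity on a slightly larger compact set
  have hUC : UniformContinuousOn f (Icc (-(R + 3)) (R + 3)) :=
    isCompact_Icc.uniformContinuousOn_of_continuous hf_cont.continuousOn
  obtain ⟨δ₀, hδ₀, hδ₀'⟩ := Metric.uniformContinuousOn_iff_le.mp hUC (ε' / 2) (half_pos hε')
  refine ⟨min δ₀ 1, lt_min hδ₀ one_pos, ?_⟩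
  intro a h hh hhδ
  have hh1 : h ≤ 1 := hhδ.trans (min_le_right _ _)
  have hhδ₀ : h ≤ δ₀ := hhδ.trans (min_le_left _ _)
  have hθh0 : 0 ≤ θ * h := mul_nonneg hθ0 hh.le
  have hθhh : θ * h ≤ h := by nlinarith
  set A : ℤ → Set ℝ := fun i => Ioc (a + i * h) (a + i * h + θ * h) with hA_def
  set S : ℤ → Set ℝ := fun i => Ioc (a + i * h) (a + i * h + h) with hS_def
  have HA := hasSum_cells hf_int a h (θ * h) hθh0 hθhh
  set LA := ∫ y in ⋃ i : ℤ, Ioc (a + i * h) (a + i * h + θ * h), f y with hLA_def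
  have HS : HasSum (fun i : ℤ => ∫ y in S i, f y) 1 := by
    have := hasSum_cells_full hf_int a h hh
    rwa [hf_prob] at this
  set d : ℤ → ℝ := fun i => (∫ y in A i, f y) - θ * ∫ y in S i, f y with hd_def
  have Hd : HasSum d (LA - θ * 1) := HA.sub (HS.mul_left θ)
  set w : ℝ → ℝ := fun y => K.indicator (fun _ => ε') y + 2 * Tail.indicator f y with hw_def
  have hw_int : Integrable w := by
    apply Integrable.add
    · exact (integrableOn_const hKfin.ne).integrable_indicator hKmeas
    · exact (hf_int.indicator hTailmeas).const_mul 2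
  have hw_nonneg : ∀ y, 0 ≤ w y := by
    intro y
    apply add_nonneg
    · exact Set.indicator_nonneg (fun _ _ => hε'.le) y
    · exact mul_nonneg (by norm_num) (Set.indicator_nonneg (fun z _ => hf_nonneg z) y)
  have HW : HasSum (fun i : ℤ => ∫ y in S i, w y) (∫ y, w y) :=
    hasSum_cells_full hw_int a h hh
  have hIw : ∫ y, w y ≤ 3 * ε / 4 := by
    have h1 : ∫ y, w y = (∫ y, K.indicator (fun _ => ε') y) + ∫ y, 2 * Tail.indicator f y := by
      rw [hw_def]
      exact integral_add
        ((integrableOn_const hKfin.ne).integrable_indicator hKmeas)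
        ((hf_int.indicator hTailmeas).const_mul 2)
    have h2 : ∫ y, K.indicator (fun _ => ε') y = ε' * (2 * R + 4) := by
      rw [integral_indicator_const _ hKmeas, measureReal_def, hvolK, smul_eq_mul, mul_comm]
    have h3 : ∫ y, 2 * Tail.indicator f y = 2 * ∫ y in Tail, f y := by
      rw [integral_const_mul, integral_indicator hTailmeas]
    have h4 : ε' * (2 * R + 4) = ε / 2 := by
      rw [hε'_def]
      field_simp
    rw [h1, h2, h3, h4]
    linarith
  have hvolS : ∀ i : ℤ, (volume (S i)).toReal = h := by
    intro i
    rw [hS_def]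
    simp only
    rw [Real.volume_Ioc, show a + i * h + h - (a + i * h) = h by ring,
      ENNReal.toReal_ofReal hh.le]
  have hvolA : ∀ i : ℤ, (volume (A i)).toReal = θ * h := by
    intro i
    rw [hA_def]
    simp only
    rw [Real.volume_Ioc, show a + i * h + θ * h - (a + i * h) = θ * h by ring,
      ENNReal.toReal_ofReal hθh0]
  have hSfin : ∀ i : ℤ, volume (S i) < ⊤ := by
    intro i
    rw [hS_def]; simp only [Real.volume_Ioc]; exact ENNReal.ofReal_lt_top
  have hAfin : ∀ i : ℤ, volume (A i) < ⊤ := by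
    intro i
    rw [hA_def]; simp only [Real.volume_Ioc]; exact ENNReal.ofReal_lt_top
  have hAS : ∀ i : ℤ, A i ⊆ S i := by
    intro i
    rw [hA_def, hS_def]
    exact Set.Ioc_subset_Ioc le_rfl (by linarith)
  have hbound : ∀ i : ℤ, |d i| ≤ ∫ y in S i, w y := by
    intro i
    by_cases hcase : S i ⊆ K
    · -- inner case
      set p := f (a + i * h) with hp_def
      have hbase : a + i * h + h ∈ K := hcase ⟨by linarith, le_rfl⟩
      have hbaseK2 : a + i * h ∈ Icc (-(R + 3)) (R + 3) := by
        rw [hK_def] at hbase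
        obtain ⟨hb1, hb2⟩ := hbase
        constructor <;> [linarith; linarith]
      have hf_close : ∀ y ∈ S i, |f y - p| ≤ ε' / 2 := by
        intro y hy
        have hyK : y ∈ K := hcase hy
        have hyK2 : y ∈ Icc (-(R + 3)) (R + 3) := by
          rw [hK_def] at hyK
          obtain ⟨hy1, hy2⟩ := hyK
          constructor <;> [linarith; linarith]
        have hdist : dist y (a + i * h) ≤ δ₀ := by
          rw [Real.dist_eq]
          obtain ⟨hy1, hy2⟩ := hy
          rw [abs_le]
          constructor <;> [linarith; linarith]
        have := hδ₀' y hyK2 (a + i * h) hbaseK2 hdist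
        rwa [Real.dist_eq] at this
      have hconst_int : ∀ s : Set ℝ, volume s < ⊤ → IntegrableOn (fun _ : ℝ => p) s := by
        intro s hs
        exact integrableOn_const hs.ne
      have hintA : (∫ y in A i, (f y - p)) = (∫ y in A i, f y) - θ * h * p := by
        rw [integral_sub hf_int.integrableOn (hconst_int _ (hAfin i)), setIntegral_const,
          measureReal_def, hvolA i, smul_eq_mul]
      have hintS : (∫ y in S i, (f y - p)) = (∫ y in S i, f y) - h * p := by
        rw [integral_sub hf_int.integrableOn (hconst_int _ (hSfin i)), setIntegral_const,
          measureReal_def, hvolS i, smul_eq_mul]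
      have hbA : |∫ y in A i, (f y - p)| ≤ ε' / 2 * (θ * h) := by
        have := norm_setIntegral_le_of_norm_le_const (hAfin i)
          (f := fun y => f y - p) (C := ε' / 2)
          (fun y hy => by
            rw [Real.norm_eq_abs]
            exact hf_close y (hAS i hy))
        rw [Real.norm_eq_abs, measureReal_def, hvolA i] at this
        exact this
      have hbS : |∫ y in S i, (f y - p)| ≤ ε' / 2 * h := by
        have := norm_setIntegral_le_of_norm_le_const (hSfin i)
          (f := fun y => f y - p) (C := ε' / 2)
          (fun y hy => by
            rw [Real.norm_eq_abs]
            exact hf_close y hy)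
        rw [Real.norm_eq_abs, measureReal_def, hvolS i] at this
        exact this
      have hd_eq : d i = (∫ y in A i, (f y - p)) - θ * ∫ y in S i, (f y - p) := by
        rw [hintA, hintS, hd_def]
        ring
      have hdi : |d i| ≤ ε' * h := by
        rw [hd_eq]
        have h1 : |(∫ y in A i, (f y - p)) - θ * ∫ y in S i, (f y - p)|
            ≤ |∫ y in A i, (f y - p)| + θ * |∫ y in S i, (f y - p)| := by
          have := abs_sub (∫ y in A i, (f y - p)) (θ * ∫ y in S i, (f y - p))
          rw [abs_mul, abs_of_nonneg hθ0] at this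
          exact this
        have h2 : θ * |∫ y in S i, (f y - p)| ≤ θ * (ε' / 2 * h) :=
          mul_le_mul_of_nonneg_left hbS hθ0
        nlinarith
      have hwlow : ε' * h ≤ ∫ y in S i, w y := by
        have hpt : ∀ y ∈ S i, ε' ≤ w y := by
          intro y hy
          rw [hw_def]
          simp only
          rw [Set.indicator_of_mem (hcase hy)]
          have : 0 ≤ 2 * Tail.indicator f y :=
            mul_nonneg (by norm_num) (Set.indicator_nonneg (fun z _ => hf_nonneg z) y)
          linarith
        calc ε' * h = ∫ _ in S i, ε' := by
              rw [setIntegral_const, measureReal_def, hvolS i, smul_eq_mul, mul_comm]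
          _ ≤ ∫ y in S i, w y :=
              setIntegral_mono_on (integrableOn_const (hSfin i).ne)
                hw_int.integrableOn measurableSet_Ioc hpt
      exact hdi.trans hwlow
    · -- outer case
      obtain ⟨x, hxS, hxK⟩ := Set.not_subset.mp hcase
      have hxK' : x < -(R + 2) ∨ R + 2 < x := by
        rw [hK_def, Set.mem_Icc] at hxK
        push_neg at hxK
        by_cases hx1 : x < -(R + 2)
        · exact Or.inl hx1
        · exact Or.inr (hxK (by linarith))
      have hSsub : ∀ y ∈ S i, y ∈ Tail := by
        intro y hy
        rw [hTail_def, Set.mem_compl_iff, Set.mem_Ioc]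
        push_neg
        obtain ⟨hy1, hy2⟩ := hy
        obtain ⟨hx1, hx2⟩ := hxS
        rcases hxK' with hx | hx
        · intro hcon
          exfalso
          have : y ≤ x + h := by linarith
          linarith
        · have : x - h ≤ y := by linarith
          intro _
          linarith
      have h1 : (∫ y in A i, f y) ≤ ∫ y in S i, f y :=
        setIntegral_mono_set hf_int.integrableOn
          (Eventually.of_forall (fun y => hf_nonneg y))
          (HasSubset.Subset.eventuallyLE (hAS i))
      have h2 : 0 ≤ ∫ y in A i, f y :=
        setIntegral_nonneg measurableSet_Ioc (fun y _ => hf_nonneg y)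
      have h3 : 0 ≤ ∫ y in S i, f y :=
        setIntegral_nonneg measurableSet_Ioc (fun y _ => hf_nonneg y)
      have hdi : |d i| ≤ 2 * ∫ y in S i, f y := by
        rw [hd_def]
        simp only
        rw [abs_le]
        constructor
        · nlinarith
        · nlinarith
      have hwlow : 2 * (∫ y in S i, f y) ≤ ∫ y in S i, w y := by
        have hpt : ∀ y ∈ S i, 2 * f y ≤ w y := by
          intro y hy
          rw [hw_def]
          simp only
          rw [Set.indicator_of_mem (hSsub y hy)]
          have : 0 ≤ K.indicator (fun _ => ε') y :=
            Set.indicator_nonneg (fun _ _ => hε'.le) y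
          linarith
        calc 2 * (∫ y in S i, f y) = ∫ y in S i, 2 * f y := by
              rw [← integral_const_mul]
          _ ≤ ∫ y in S i, w y :=
              setIntegral_mono_on (hf_int.integrableOn.const_mul 2)
                hw_int.integrableOn measurableSet_Ioc hpt
      exact hdi.trans hwlow
  -- conclude
  have hsummable_b : Summable (fun i : ℤ => ∫ y in S i, w y) := HW.summable
  have hsummable_d : Summable (fun i : ℤ => |d i|) :=
    Summable.of_nonneg_of_le (fun i => abs_nonneg _) hbound hsummable_b
  have h4 : |LA - θ| ≤ ∑' i, |d i| := by
    have htsum : ∑' i, d i = LA - θ * 1 := Hd.tsum_eq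
    have habs : |∑' i, d i| ≤ ∑' i, |d i| := by
      have := norm_tsum_le_tsum_norm (f := d) (by
        simpa only [Real.norm_eq_abs] using hsummable_d)
      simpa only [Real.norm_eq_abs] using this
    rw [htsum] at habs
    rw [show LA - θ = LA - θ * 1 by ring]
    exact habs
  have h5 : ∑' i, |d i| ≤ ∑' i : ℤ, ∫ y in S i, w y :=
    Summable.tsum_le_tsum hbound hsummable_d hsummable_b
  have h6 : ∑' i : ℤ, ∫ y in S i, w y = ∫ y, w y := HW.tsum_eq
  have h7 : (∑' i : ℤ, ∫ y in Ioc (a + i * h) (a + i * h + θ * h), f y) = LA := HA.tsum_eq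
  rw [h7]
  calc |LA - θ| ≤ ∑' i, |d i| := h4
    _ ≤ ∑' i : ℤ, ∫ y in S i, w y := h5
    _ = ∫ y, w y := h6
    _ ≤ 3 * ε / 4 := hIw
    _ ≤ ε := by linarith

/-- For every `t ∈ ℝ` and `T > 0`,
`lim_{σ→∞} Σ_{i∈ℤ} p_i(t,t+T) = λT`, where
`p_i(t,t+T) = ∫_t^{t+T} (1/σ) f_ξ((x - i/λ)/σ) dx`. -/
theorem psra_sum_pi_tendsto (lam M : ℝ) (hlam : 0 < lam)
    (f : ℝ → ℝ) (hf_cont : Continuous f) (hf_nonneg : ∀ x, 0 ≤ f x)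
    (hf_int : Integrable f) (hf_prob : ∫ x, f x = 1)
    (hf_bdd : ∀ x, f x ≤ M)
    (hf_var : Integrable (fun x => x ^ 2 * f x))
    (t T : ℝ) (hT : 0 < T) :
    Tendsto (fun σ : ℝ => ∑' i : ℤ, ∫ x in t..(t + T), (1 / σ) * f ((x - i / lam) / σ))
      atTop (nhds (lam * T)) := by
  have hlamT : 0 < lam * T := mul_pos hlam hT
  set n : ℕ := ⌊lam * T⌋₊ with hn_def
  set θ : ℝ := lam * T - n with hθ_def
  have hn_le : (n : ℝ) ≤ lam * T := Nat.floor_le hlamT.le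
  have hn_lt : lam * T < (n : ℝ) + 1 := Nat.lt_floor_add_one _
  have hθ0 : 0 ≤ θ := by rw [hθ_def]; linarith
  have hθ1 : θ ≤ 1 := by rw [hθ_def]; linarith
  rw [Metric.tendsto_atTop]
  intro ε hε
  obtain ⟨δ, hδ0, hkey⟩ := key_estimate hf_cont hf_nonneg hf_int hf_prob hθ0 hθ1
    (half_pos hε)
  refine ⟨max 1 (1 / (lam * δ)), fun σ hσ => ?_⟩
  have hσ1 : 1 ≤ σ := le_trans (le_max_left _ _) hσ
  have hσ0 : 0 < σ := by linarith
  set h : ℝ := 1 / (lam * σ) with hh_def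
  have hh0 : 0 < h := by rw [hh_def]; positivity
  have hhδ : h ≤ δ := by
    have h1 : 1 / (lam * δ) ≤ σ := le_trans (le_max_right _ _) hσ
    rw [div_le_iff₀ (mul_pos hlam hδ0)] at h1
    rw [hh_def, div_le_iff₀ (mul_pos hlam hσ0)]
    nlinarith
  have hθhh : θ * h ≤ h := by nlinarith
  have hθh0 : 0 ≤ θ * h := mul_nonneg hθ0 hh0.le
  set L := ∫ y in ⋃ i : ℤ, Ioc (t / σ + i * h) (t / σ + i * h + θ * h), f y with hL_def
  have hstep := stepA hf_int hf_prob (t / σ) h (θ * h) hh0 hθh0 hθhh n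
  -- rewrite each term of the original sum
  have hterm : ∀ i : ℤ, (∫ x in t..(t + T), (1 / σ) * f ((x - i / lam) / σ))
      = ∫ y in Ioc (t / σ + (-i : ℤ) * h) (t / σ + (-i : ℤ) * h + ((n : ℝ) * h + θ * h)), f y := by
    intro i
    rw [intervalIntegral.integral_const_mul]
    have hcomp : (∫ x in t..(t + T), f ((x - i / lam) / σ))
        = σ • ∫ x in (t / σ - (i / lam) / σ)..((t + T) / σ - (i / lam) / σ), f x := by
      have : (fun x => f ((x - i / lam) / σ)) = fun x => f (x / σ - (i / lam) / σ) := by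
        funext x
        rw [sub_div]
      rw [this]
      exact intervalIntegral.integral_comp_div_sub f hσ0.ne' ((i / lam) / σ)
    rw [hcomp, smul_eq_mul, ← mul_assoc, one_div, inv_mul_cancel₀ hσ0.ne', one_mul]
    have hadd : (t + T) / σ = t / σ + T / σ := add_div t T σ
    have hTσ : 0 < T / σ := div_pos hT hσ0
    have hle : t / σ - (i / lam) / σ ≤ (t + T) / σ - (i / lam) / σ := by
      rw [hadd]; linarith
    rw [intervalIntegral.integral_of_le hle]
    have e1 : t / σ - (i / lam) / σ = t / σ + ((-i : ℤ) : ℝ) * h := by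
      rw [hh_def]
      push_cast
      field_simp
      ring
    have e2 : (t + T) / σ - (i / lam) / σ
        = t / σ + ((-i : ℤ) : ℝ) * h + ((n : ℝ) * h + θ * h) := by
      rw [hθ_def, hh_def]
      push_cast
      field_simp
      ring
    rw [e1, e2]
  have HS2 : HasSum (fun i : ℤ => ∫ x in t..(t + T), (1 / σ) * f ((x - i / lam) / σ))
      ((n : ℝ) + L) := by
    have hneg := ((Equiv.neg ℤ).hasSum_iff).mpr hstep
    have hfun : (fun i : ℤ => ∫ x in t..(t + T), (1 / σ) * f ((x - i / lam) / σ))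
        = (fun i : ℤ =>
            ∫ y in Ioc (t / σ + i * h) (t / σ + i * h + ((n : ℝ) * h + θ * h)), f y)
          ∘ (Equiv.neg ℤ) := by
      funext i
      have := hterm i
      simpa using this
    rw [hfun]
    exact hneg
  rw [HS2.tsum_eq, Real.dist_eq]
  have hLθ : |L - θ| ≤ ε / 2 := by
    have hk := hkey (t / σ) h hh0 hhδ
    have htsum : (∑' i : ℤ, ∫ y in Ioc (t / σ + i * h) (t / σ + i * h + θ * h), f y) = L :=
      (hasSum_cells hf_int (t / σ) h (θ * h) hθh0 hθhh).tsum_eq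
    rwa [htsum] at hk
  have : (n : ℝ) + L - lam * T = L - θ := by rw [hθ_def]; ring
  rw [this]
  calc |L - θ| ≤ ε / 2 := hLθ
    _ < ε := by linarith
end

section
/- For every t ∈ ℝ, T > 0 and every complex number z with |z| ≤ 1, lim_{σ→∞} Σ_{i∈ℤ} p_i(t,t+T)·(1 + (z-1)·p_i(t,t+T)·∫_0^1 s/(1+(z-1)(1-s)p_i(t,t+T))² ds) = λT. -/
open MeasureTheory Filter Set intervalIntegral

private lemma bddInt {g : ℝ → ℝ} {C : ℝ} (hg : Measurable g)
    (hC : ∀ x, |g x| ≤ C) (x y : ℝ) : IntervalIntegrable g volume x y := by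
  rw [intervalIntegrable_iff]
  refine Integrable.mono' (g := fun _ => C) ?_ hg.aestronglyMeasurable.restrict
    (Eventually.of_forall fun t => by simpa using hC t)
  exact integrableOn_const measure_Ioc_lt_top.ne

private lemma mul_bddInt {f g : ℝ → ℝ} {C : ℝ} (hf : Integrable f)
    (hg : Measurable g) (hC : ∀ x, |g x| ≤ C) :
    Integrable (fun u => f u * g u) := by
  have := hf.bdd_mul (hg.aestronglyMeasurable) (Eventually.of_forall fun x => by simpa using hC x)
  exact this.congr (Eventually.of_forall fun u => mul_comm _ _)

private lemma per_bound {e : ℝ → ℝ} (hmeas : Measurable e) (hbdd : ∀ x, |e x| ≤ 1)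
    (hper : Function.Periodic e 1) (hmean : (∫ x in (0:ℝ)..1, e x) = 0)
    (x y : ℝ) : |∫ v in x..y, e v| ≤ 1 := by
  have hint : ∀ a b : ℝ, IntervalIntegrable e volume a b := fun a b => bddInt hmeas hbdd a b
  suffices main : ∀ a b : ℝ, a ≤ b → |∫ v in a..b, e v| ≤ 1 by
    rcases le_total x y with h | h
    · exact main x y h
    · rw [integral_symm, abs_neg]; exact main y x h
  clear x y
  intro x y h
  · set n : ℤ := ⌊y - x⌋ with hn
    have h1 : ∫ v in x..(x + n • (1:ℝ)), e v = 0 := by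
      rw [hper.intervalIntegral_add_zsmul_eq n x hint]
      rw [hper.intervalIntegral_add_eq x 0]
      simp [hmean]
    have h2 : (∫ v in x..(x + n • (1:ℝ)), e v) + ∫ v in (x + n • (1:ℝ))..y, e v
        = ∫ v in x..y, e v := integral_add_adjacent_intervals (hint _ _) (hint _ _)
    rw [← h2, h1, zero_add]
    have h3 : |∫ v in (x + n • (1:ℝ))..y, e v| ≤ 1 * |y - (x + n • (1:ℝ))| := by
      rw [← Real.norm_eq_abs]
      apply intervalIntegral.norm_integral_le_of_norm_le_const
      intro u _; simpa using hbdd u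
    have h4 : |y - (x + n • (1:ℝ))| ≤ 1 := by
      have h5 : (n : ℝ) ≤ y - x := Int.floor_le _
      have h6 : y - x < n + 1 := Int.lt_floor_add_one _
      simp only [zsmul_eq_mul, mul_one]
      rw [abs_le]; constructor <;> [linarith; linarith]
    calc |∫ v in (x + n • (1:ℝ))..y, e v| ≤ 1 * |y - (x + n • (1:ℝ))| := h3
      _ ≤ 1 := by rw [one_mul]; exact h4

private lemma osc {M : ℝ} {f : ℝ → ℝ} (hf_cont : Continuous f) (hf_nonneg : ∀ x, 0 ≤ f x)
    (hf_int : Integrable f) (hf_bdd : ∀ x, f x ≤ M)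
    (hf_var : Integrable (fun x => x ^ 2 * f x))
    (e : ℝ → ℝ) (hmeas : Measurable e) (hbdd : ∀ x, |e x| ≤ 1)
    (hper : Function.Periodic e 1) (hmean : (∫ x in (0:ℝ)..1, e x) = 0)
    (lam t : ℝ) (hlam : 0 < lam) :
    Tendsto (fun σ : ℝ => ∫ u, f u * e (lam * (t - σ * u))) atTop (nhds 0) := by
  have hM : 0 ≤ M := le_trans (hf_nonneg 0) (hf_bdd 0)
  have habs : ∀ x, |f x| ≤ M := fun x => by rw [abs_of_nonneg (hf_nonneg x)]; exact hf_bdd x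
  rw [NormedAddCommGroup.tendsto_nhds_zero]
  intro ε hε
  set V := ∫ u, u ^ 2 * f u with hVdef
  have hV : 0 ≤ V := integral_nonneg (fun u => mul_nonneg (sq_nonneg u) (hf_nonneg u))
  set R : ℝ := max 1 (Real.sqrt (6 * (V + 1) / ε)) with hRdef
  have hR1 : 1 ≤ R := le_max_left _ _
  have hR0 : 0 < R := lt_of_lt_of_le one_pos hR1
  have hRsq : 6 * (V + 1) / ε ≤ R ^ 2 := by
    have h0 : 0 ≤ 6 * (V + 1) / ε := by positivity
    have h1 : Real.sqrt (6 * (V + 1) / ε) ≤ R := le_max_right _ _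
    nlinarith [Real.sq_sqrt h0, Real.sqrt_nonneg (6 * (V + 1) / ε)]
  -- measurability and integrability of the integrand, for every σ
  set g : ℝ → ℝ → ℝ := fun σ u => e (lam * (t - σ * u)) with hgdef
  have hg_meas : ∀ σ, Measurable (g σ) := fun σ =>
    hmeas.comp ((continuous_const.mul (continuous_const.sub
      (continuous_const.mul continuous_id))).measurable)
  have hg_bdd : ∀ σ u, |g σ u| ≤ 1 := fun σ u => hbdd _
  have hInt : ∀ σ, Integrable (fun u => f u * g σ u) := fun σ =>
    mul_bddInt hf_int (hg_meas σ) (hg_bdd σ)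
  -- tail bound
  have htail : ∀ σ, |∫ u in (Icc (-R) R)ᶜ, f u * g σ u| ≤ ε / 6 := by
    intro σ
    have e1 : |∫ u in (Icc (-R) R)ᶜ, f u * g σ u| ≤ ∫ u in (Icc (-R) R)ᶜ, |f u * g σ u| := by
      rw [← Real.norm_eq_abs]
      exact (norm_integral_le_integral_norm _)
    have e2 : ∫ u in (Icc (-R) R)ᶜ, |f u * g σ u| ≤
        ∫ u in (Icc (-R) R)ᶜ, (1 / R ^ 2) * (u ^ 2 * f u) := by
      apply setIntegral_mono_on
      · exact (hInt σ).norm.integrableOn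
      · exact (hf_var.const_mul _).integrableOn
      · exact measurableSet_Icc.compl
      · intro u hu
        have hu2 : R < |u| := by
          simp only [mem_compl_iff, mem_Icc, not_and_or, not_le] at hu
          rcases hu with h | h
          · rw [abs_of_nonpos (by linarith)]; linarith
          · rw [abs_of_nonneg (by linarith)]; linarith
        have hu3 : R ^ 2 ≤ u ^ 2 := by nlinarith [abs_nonneg u, sq_abs u]
        have : |f u * g σ u| ≤ f u := by
          rw [abs_mul, abs_of_nonneg (hf_nonneg u)]
          calc f u * |g σ u| ≤ f u * 1 := by
                exact mul_le_mul_of_nonneg_left (hg_bdd σ u) (hf_nonneg u)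
            _ = f u := mul_one _
        calc |f u * g σ u| ≤ f u := this
          _ ≤ 1 / R ^ 2 * (u ^ 2 * f u) := by
              rw [div_mul_eq_mul_div, one_mul, le_div_iff₀ (by positivity)]
              nlinarith [hf_nonneg u]
    have e3 : ∫ u in (Icc (-R) R)ᶜ, (1 / R ^ 2) * (u ^ 2 * f u) ≤ (1 / R ^ 2) * V := by
      rw [MeasureTheory.integral_const_mul]
      apply mul_le_mul_of_nonneg_left _ (by positivity)
      exact setIntegral_le_integral hf_var
        (Eventually.of_forall fun u => mul_nonneg (sq_nonneg u) (hf_nonneg u))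
    have e4 : (1 / R ^ 2) * V ≤ ε / 6 := by
      rw [div_mul_eq_mul_div, one_mul, div_le_iff₀ (by positivity)]
      have h2 : 6 * (V + 1) / ε * (ε / 6) = V + 1 := by field_simp
      nlinarith [mul_le_mul_of_nonneg_right hRsq (le_of_lt (show (0:ℝ) < ε / 6 by linarith))]
    linarith
  -- uniform continuity
  obtain ⟨δ, hδ0, hδ⟩ : ∃ δ > 0, ∀ x ∈ Icc (-R) R, ∀ y ∈ Icc (-R) R,
      |x - y| < δ → |f x - f y| < ε / (6 * R) := by
    have hc : UniformContinuousOn f (Icc (-R) R) :=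
      (isCompact_Icc).uniformContinuousOn_of_continuous (hf_cont.continuousOn)
    rw [Metric.uniformContinuousOn_iff] at hc
    obtain ⟨δ, hδ0, h⟩ := hc (ε / (6 * R)) (by positivity)
    exact ⟨δ, hδ0, fun x hx y hy hxy => by
      have := h x hx y hy (by rwa [Real.dist_eq]); rwa [Real.dist_eq] at this⟩
  set n : ℕ := ⌈2 * R / δ⌉₊ + 1 with hndef
  have hn0 : 0 < (n:ℝ) := by positivity
  set L : ℝ := 2 * R / n with hLdef
  have hL0 : 0 < L := by positivity
  have hnL : (n:ℝ) * L = 2 * R := by rw [hLdef]; field_simp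
  have hLδ : L < δ := by
    rw [hLdef, div_lt_iff₀ hn0]
    have h1 : 2 * R / δ < n := by
      calc 2*R/δ ≤ (⌈2*R/δ⌉₊ : ℝ) := Nat.le_ceil _
        _ < n := by rw [hndef]; push_cast; linarith
    have := (div_lt_iff₀ hδ0).1 h1; linarith
  set a : ℕ → ℝ := fun j => -R + j * L with hadef
  have ha0 : a 0 = -R := by simp [hadef]
  have hstep : ∀ j : ℕ, a (j+1) = a j + L := fun j => by
    simp only [hadef]; push_cast; ring
  have han : a n = R := by simp only [hadef, hnL]; ring
  have haR : ∀ j : ℕ, j ≤ n → a j ∈ Icc (-R) R := by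
    intro j hj
    have h1 : 0 ≤ (j:ℝ) * L := by positivity
    have h2 : (j:ℝ) * L ≤ n * L := mul_le_mul_of_nonneg_right (by exact_mod_cast hj) hL0.le
    simp only [hadef, mem_Icc]
    constructor
    · linarith
    · rw [hnL] at h2; linarith
  set σ₁ : ℝ := max 1 (6 * n * M / (lam * ε)) with hσ₁def
  rw [eventually_atTop]
  refine ⟨σ₁, fun σ hσ => ?_⟩
  have hσ1 : (1:ℝ) ≤ σ := le_trans (le_max_left _ _) hσ
  have hσ0 : 0 < σ := lt_of_lt_of_le one_pos hσ1
  have hbsub : ∀ u, |f u - f (a 0)| ≤ 2 * M := fun u => by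
    have h1 := abs_le.1 (habs u); have h2 := abs_le.1 (habs (a 0))
    rw [abs_le]; constructor <;> linarith
  -- per-piece bound
  have piece : ∀ j : ℕ, j < n →
      |∫ u in a j..a (j+1), f u * g σ u| ≤ ε/(6*R) * L + M / (lam * σ) := by
    intro j hj
    have hbsubj : ∀ u, |f u - f (a j)| ≤ 2 * M := fun u => by
      have h1 := abs_le.1 (habs u); have h2 := abs_le.1 (habs (a j))
      rw [abs_le]; constructor <;> linarith
    have h1 : IntervalIntegrable (fun u => (f u - f (a j)) * g σ u) volume (a j) (a (j+1)) := by
      refine bddInt (C := 2*M) ((hf_cont.measurable.sub measurable_const).mul (hg_meas σ)) ?_ _ _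
      intro u
      show |(f u - f (a j)) * g σ u| ≤ 2 * M
      rw [abs_mul]
      calc |f u - f (a j)| * |g σ u| ≤ (2*M) * 1 :=
            mul_le_mul (hbsubj u) (hg_bdd σ u) (abs_nonneg _) (by linarith)
        _ = 2*M := mul_one _
    have h2 : IntervalIntegrable (fun u => f (a j) * g σ u) volume (a j) (a (j+1)) := by
      refine bddInt (C := M) ((hg_meas σ).const_mul _) ?_ _ _
      intro u
      rw [abs_mul]
      calc |f (a j)| * |g σ u| ≤ M * 1 :=
            mul_le_mul (habs _) (hg_bdd σ u) (abs_nonneg _) hM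
        _ = M := mul_one _
    have hsplit : ∫ u in a j..a (j+1), f u * g σ u =
        (∫ u in a j..a (j+1), (f u - f (a j)) * g σ u)
          + f (a j) * ∫ u in a j..a (j+1), g σ u := by
      rw [← intervalIntegral.integral_const_mul, ← intervalIntegral.integral_add h1 h2]
      apply intervalIntegral.integral_congr
      intro u _; ring
    have hjle : a j ≤ a (j+1) := by rw [hstep]; linarith
    have h5 : |∫ u in a j..a (j+1), (f u - f (a j)) * g σ u| ≤ ε/(6*R) * L := by
      have := intervalIntegral.norm_integral_le_of_norm_le_const
        (C := ε/(6*R)) (f := fun u => (f u - f (a j)) * g σ u) (a := a j) (b := a (j+1)) ?_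
      · rw [Real.norm_eq_abs] at this
        calc |∫ u in a j..a (j+1), (f u - f (a j)) * g σ u| ≤ ε/(6*R) * |a (j+1) - a j| := this
          _ = ε/(6*R) * L := by rw [hstep]; congr 1; rw [abs_of_nonneg (by linarith)]; ring
      · intro u hu
        rw [Set.uIoc_of_le hjle] at hu
        have hmem : u ∈ Icc (a j) (a (j+1)) := ⟨hu.1.le, hu.2⟩
        have hj1 := haR j hj.le
        have hj2 := haR (j+1) hj
        have huIcc : u ∈ Icc (-R) R := ⟨le_trans hj1.1 hmem.1, le_trans hmem.2 hj2.2⟩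
        have hdist : |u - a j| < δ := by
          have hu2 : u - a j ≤ L := by have := hmem.2; rw [hstep] at this; linarith
          have hu0 : 0 ≤ u - a j := by linarith [hmem.1]
          rw [abs_of_nonneg hu0]; linarith
        have hcl := hδ u huIcc (a j) hj1 hdist
        rw [Real.norm_eq_abs, abs_mul]
        calc |f u - f (a j)| * |g σ u| ≤ |f u - f (a j)| * 1 :=
              mul_le_mul_of_nonneg_left (hg_bdd σ u) (abs_nonneg _)
          _ = |f u - f (a j)| := mul_one _
          _ ≤ ε/(6*R) := hcl.le
    have h6 : |∫ u in a j..a (j+1), g σ u| ≤ 1 / (lam * σ) := by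
      have hls : 0 < lam * σ := mul_pos hlam hσ0
      have hc : (-(lam * σ)) ≠ 0 := neg_ne_zero.2 (ne_of_gt hls)
      rw [intervalIntegral.integral_congr
        (g := fun u => e ((-(lam*σ))*u + lam*t)) (fun u _ => by simp only [hgdef]; congr 1; ring)]
      rw [intervalIntegral.integral_comp_mul_add e hc (lam*t)]
      rw [smul_eq_mul, abs_mul, abs_inv, abs_neg, abs_of_pos hls]
      have hb2 : (lam*σ)⁻¹ * |∫ v in (-(lam*σ))*(a j) + lam*t..(-(lam*σ))*(a (j+1)) + lam*t, e v|
          ≤ (lam*σ)⁻¹ * 1 :=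
        mul_le_mul_of_nonneg_left (per_bound hmeas hbdd hper hmean _ _) (by positivity)
      rw [one_div]
      simpa using hb2
    calc |∫ u in a j..a (j+1), f u * g σ u|
        ≤ |∫ u in a j..a (j+1), (f u - f (a j)) * g σ u|
          + |f (a j) * ∫ u in a j..a (j+1), g σ u| := by rw [hsplit]; exact abs_add_le _ _
      _ ≤ ε/(6*R) * L + M / (lam * σ) := by
          apply add_le_add h5
          rw [abs_mul]
          calc |f (a j)| * |∫ u in a j..a (j+1), g σ u| ≤ M * (1/(lam*σ)) :=
                mul_le_mul (habs _) h6 (abs_nonneg _) hM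
            _ = M / (lam*σ) := by ring
  have hsum : ∫ u in (-R)..R, f u * g σ u
      = ∑ j ∈ Finset.range n, ∫ u in a j..a (j+1), f u * g σ u := by
    rw [intervalIntegral.sum_integral_adjacent_intervals
      (fun j _ => ((hInt σ).intervalIntegrable))]
    rw [ha0, han]
  have hmid : |∫ u in (-R)..R, f u * g σ u| ≤ ε/3 + n * M/(lam * σ) := by
    rw [hsum]
    have hb1 : ∑ j ∈ Finset.range n, (ε/(6*R) * L + M/(lam*σ))
        = (n:ℝ) * (ε/(6*R) * L + M/(lam*σ)) := by
      rw [Finset.sum_const, Finset.card_range, nsmul_eq_mul]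
    calc |∑ j ∈ Finset.range n, ∫ u in a j..a (j+1), f u * g σ u|
        ≤ ∑ j ∈ Finset.range n, |∫ u in a j..a (j+1), f u * g σ u| :=
          Finset.abs_sum_le_sum_abs _ _
      _ ≤ ∑ j ∈ Finset.range n, (ε/(6*R) * L + M/(lam*σ)) :=
          Finset.sum_le_sum (fun j hj => piece j (Finset.mem_range.1 hj))
      _ = (n:ℝ) * (ε/(6*R) * L + M/(lam*σ)) := hb1
      _ = ε/(6*R) * ((n:ℝ)*L) + n*M/(lam*σ) := by ring
      _ = ε/3 + n * M/(lam * σ) := by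
          rw [hnL]; congr 1; field_simp; ring
  have hthr : (n:ℝ) * M / (lam * σ) ≤ ε/6 := by
    have h1 : 6 * n * M / (lam * ε) ≤ σ := le_trans (le_max_right _ _) hσ
    have h2 : 6 * (n:ℝ) * M ≤ σ * (lam * ε) := by
      rw [div_le_iff₀ (by positivity)] at h1; exact h1
    rw [div_le_iff₀ (by positivity)]
    nlinarith
  have hdecomp : ∫ u, f u * g σ u
      = (∫ u in Icc (-R) R, f u * g σ u) + ∫ u in (Icc (-R) R)ᶜ, f u * g σ u :=
    (integral_add_compl measurableSet_Icc (hInt σ)).symm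
  have hIccIoc : ∫ u in Icc (-R) R, f u * g σ u = ∫ u in (-R)..R, f u * g σ u := by
    rw [MeasureTheory.integral_Icc_eq_integral_Ioc, intervalIntegral.integral_of_le (by linarith)]
  rw [Real.norm_eq_abs]
  have : |∫ u, f u * g σ u| ≤ (ε/3 + n * M/(lam * σ)) + ε/6 := by
    rw [hdecomp, hIccIoc]
    exact le_trans (abs_add_le _ _) (add_le_add hmid (htail σ))
  have hfin : (ε/3 + (n:ℝ) * M/(lam * σ)) + ε/6 < ε := by linarith
  exact lt_of_le_of_lt this hfin

private lemma Apart (lam M : ℝ) (hlam : 0 < lam)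
    (f : ℝ → ℝ) (hf_cont : Continuous f) (hf_nonneg : ∀ x, 0 ≤ f x)
    (hf_int : Integrable f) (hf_prob : ∫ x, f x = 1)
    (hf_bdd : ∀ x, f x ≤ M)
    (hf_var : Integrable (fun x => x ^ 2 * f x))
    (t T : ℝ) (hT : 0 < T)
    (p : ℝ → ℤ → ℝ)
    (hp : ∀ σ i, p σ i = ∫ x in t..(t + T), (1 / σ) * f ((x - i / lam) / σ)) :
    (∀ σ : ℝ, 0 < σ → Summable (fun i : ℤ => p σ i)) ∧
    Tendsto (fun σ : ℝ => ∑' i : ℤ, p σ i) atTop (nhds (lam * T)) := by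
  have hlamT : 0 < lam * T := mul_pos hlam hT
  -- the oscillation function
  set E : ℝ → ℝ := fun c => Int.fract c - Int.fract (c + lam * T) with hEdef
  have hEmeas : Measurable E := measurable_fract.sub (measurable_fract.comp (measurable_add_const _))
  have hEbdd : ∀ c, |E c| ≤ 1 := by
    intro c
    have h1 := Int.fract_nonneg c
    have h2 := Int.fract_lt_one c
    have h3 := Int.fract_nonneg (c + lam * T)
    have h4 := Int.fract_lt_one (c + lam * T)
    rw [hEdef, abs_le]; constructor <;> simp only <;> linarith
  have hEper : Function.Periodic E 1 := by
    intro c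
    have h1 : c + 1 + lam * T = (c + lam * T) + 1 := by ring
    simp only [hEdef, h1, Int.fract_add_one]
  have hfract_int : ∀ x y : ℝ, IntervalIntegrable Int.fract volume x y := by
    refine bddInt (C := 1) measurable_fract (fun c => ?_)
    rw [abs_of_nonneg (Int.fract_nonneg c)]; exact (Int.fract_lt_one c).le
  have hEmean : (∫ c in (0:ℝ)..1, E c) = 0 := by
    have int2 : IntervalIntegrable (fun c => Int.fract (c + lam * T)) volume 0 1 := by
      refine bddInt (C := 1) (g := fun c => Int.fract (c + lam * T))
        (measurable_fract.comp (measurable_add_const _)) (fun c => ?_) 0 1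
      rw [abs_of_nonneg (Int.fract_nonneg _)]; exact (Int.fract_lt_one _).le
    rw [hEdef]
    rw [intervalIntegral.integral_sub (hfract_int 0 1) int2]
    have h1 : (∫ c in (0:ℝ)..1, Int.fract (c + lam * T)) = ∫ c in (0:ℝ)..1, Int.fract c := by
      rw [intervalIntegral.integral_comp_add_right Int.fract (lam * T)]
      have h2 := (Int.fract_periodic ℝ).intervalIntegral_add_eq (lam * T) 0
      rw [show (1:ℝ) + lam * T = lam * T + 1 by ring]
      simpa using h2
    rw [h1, sub_self]
  -- per-σ identities
  have main : ∀ σ : ℝ, 0 < σ → (Summable (fun i : ℤ => p σ i) ∧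
      ∑' i : ℤ, p σ i = lam * T + ∫ u, f u * E (lam * (t - σ * u))) := by
    intro σ hσ
    set a : ℤ → ℝ := fun i => (t - i / lam) / σ with hadef
    set b : ℤ → ℝ := fun i => (t + T - i / lam) / σ with hbdef
    set c : ℝ → ℝ := fun u => lam * (t - σ * u) with hcdef
    have hab : ∀ i, a i ≤ b i := fun i => by
      rw [hadef, hbdef]
      rw [div_le_div_iff_of_pos_right hσ]
      linarith
    have hstep1 : ∀ i : ℤ, p σ i = ∫ u in a i..b i, f u := by
      intro i
      rw [hp]
      rw [intervalIntegral.integral_const_mul]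
      have h1 : (∫ x in t..t + T, f ((x - i / lam) / σ))
          = ∫ x in (t - i/lam)..(t + T - i/lam), f (x / σ) := by
        have h2 := intervalIntegral.integral_comp_add_right (a := t) (b := t + T)
          (fun y => f (y / σ)) (-(i / lam))
        simp only [← sub_eq_add_neg] at h2
        exact h2
      rw [h1, intervalIntegral.integral_comp_div (f := f) (ne_of_gt hσ)]
      rw [hadef, hbdef, smul_eq_mul, ← mul_assoc, one_div,
        inv_mul_cancel₀ (ne_of_gt hσ), one_mul]
    have hkey : ∀ (u : ℝ) (i : ℤ), u ∈ Ioc (a i) (b i)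
        ↔ i ∈ Finset.Ioc ⌊c u⌋ ⌊c u + lam * T⌋ := by
      intro u i
      rw [Set.mem_Ioc, Finset.mem_Ioc, Int.floor_lt, Int.le_floor]
      constructor
      · rintro ⟨h1, h2⟩
        rw [hadef] at h1; rw [hbdef] at h2
        rw [div_lt_iff₀ hσ] at h1
        rw [le_div_iff₀ hσ] at h2
        constructor
        · have h3 : t - u * σ < i / lam := by linarith
          have h4 := (lt_div_iff₀ hlam).1 h3
          rw [hcdef]; dsimp only; nlinarith
        · have h3 : (i:ℝ) / lam ≤ t + T - u * σ := by linarith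
          have h4 := (div_le_iff₀ hlam).1 h3
          rw [hcdef]; dsimp only; nlinarith
      · rintro ⟨h1, h2⟩
        rw [hcdef] at h1 h2; dsimp only at h1 h2
        constructor
        · rw [hadef]; dsimp only; rw [div_lt_iff₀ hσ]
          have h3 : (t - u * σ) * lam < i := by nlinarith
          have h4 := (lt_div_iff₀ hlam).2 h3
          linarith
        · rw [hbdef]; dsimp only; rw [le_div_iff₀ hσ]
          have h3 : (i:ℝ) ≤ (t + T - u * σ) * lam := by nlinarith
          have h4 := (div_le_iff₀ hlam).2 h3
          linarith
    have hptw : ∀ u : ℝ, ∑' i : ℤ, (Ioc (a i) (b i)).indicator f u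
        = (lam * T + E (c u)) * f u := by
      intro u
      have hfl : (⌊c u⌋ : ℤ) ≤ ⌊c u + lam * T⌋ := Int.floor_le_floor (by linarith)
      have h1 : ∀ i : ℤ, (Ioc (a i) (b i)).indicator f u
          = if i ∈ Finset.Ioc ⌊c u⌋ ⌊c u + lam * T⌋ then f u else 0 := by
        intro i
        rw [Set.indicator_apply]
        exact if_congr (hkey u i) rfl rfl
      rw [tsum_congr h1]
      rw [tsum_eq_sum (s := Finset.Ioc ⌊c u⌋ ⌊c u + lam * T⌋) (fun i hi => if_neg hi)]
      rw [Finset.sum_congr rfl (fun i hi => if_pos hi)]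
      rw [Finset.sum_const, Int.card_Ioc, nsmul_eq_mul]
      have h3 : ((⌊c u + lam * T⌋ - ⌊c u⌋).toNat : ℝ)
          = (⌊c u + lam * T⌋ : ℝ) - (⌊c u⌋ : ℝ) := by
        have h4 := Int.toNat_of_nonneg (sub_nonneg.2 hfl)
        rw [← Int.cast_natCast, h4]
        push_cast
        ring
      rw [h3]
      have h4 : (⌊c u + lam * T⌋ : ℝ) - (⌊c u⌋ : ℝ) = lam * T + E (c u) := by
        rw [hEdef]
        dsimp only
        rw [← Int.self_sub_floor, ← Int.self_sub_floor]
        ring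
      rw [h4]
    -- measurability
    have hFmeas : ∀ i : ℤ, AEStronglyMeasurable ((Ioc (a i) (b i)).indicator f) volume :=
      fun i => ((hf_cont.measurable).indicator measurableSet_Ioc).aestronglyMeasurable
    -- lintegral bound
    set K : ℕ := (⌊lam * T⌋ + 1).toNat with hKdef
    have hcard : ∀ u : ℝ, ((Finset.Ioc ⌊c u⌋ ⌊c u + lam * T⌋).card : ℕ) ≤ K := by
      intro u
      rw [Int.card_Ioc, hKdef]
      apply Int.toNat_le_toNat
      have h5 : ⌊c u + lam * T⌋ < ⌊c u⌋ + (⌊lam * T⌋ + 2) := by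
        rw [Int.floor_lt]
        push_cast
        nlinarith [Int.lt_floor_add_one (c u), Int.lt_floor_add_one (lam * T)]
      omega
    have hnnptw : ∀ u : ℝ, (∑' i : ℤ, (‖(Ioc (a i) (b i)).indicator f u‖₊ : ENNReal))
        ≤ (K : ENNReal) * ‖f u‖₊ := by
      intro u
      have h1 : ∀ i : ℤ, (‖(Ioc (a i) (b i)).indicator f u‖₊ : ENNReal)
          = if i ∈ Finset.Ioc ⌊c u⌋ ⌊c u + lam * T⌋ then (‖f u‖₊ : ENNReal) else 0 := by
        intro i
        rw [Set.indicator_apply]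
        split_ifs with h2 h3 h3
        · rfl
        · exact absurd ((hkey u i).1 h2) h3
        · exact absurd ((hkey u i).2 h3) h2
        · simp
      rw [tsum_congr h1]
      rw [tsum_eq_sum (s := Finset.Ioc ⌊c u⌋ ⌊c u + lam * T⌋) (fun i hi => if_neg hi)]
      rw [Finset.sum_congr rfl (fun i hi => if_pos hi)]
      rw [Finset.sum_const, nsmul_eq_mul]
      exact mul_le_mul_left (Nat.cast_le.2 (hcard u)) _
    have hlint : (∑' i : ℤ, ∫⁻ u, ‖(Ioc (a i) (b i)).indicator f u‖₊) ≠ ⊤ := by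
      rw [← MeasureTheory.lintegral_tsum (fun i =>
        ((hf_cont.measurable).indicator (measurableSet_Ioc)).nnnorm.coe_nnreal_ennreal.aemeasurable)]
      have h1 : (∫⁻ u, ∑' i : ℤ, (‖(Ioc (a i) (b i)).indicator f u‖₊ : ENNReal))
          ≤ ∫⁻ u, (K : ENNReal) * ‖f u‖₊ := lintegral_mono hnnptw
      have h2 : (∫⁻ u, (K : ENNReal) * ‖f u‖₊) = (K : ENNReal) * ∫⁻ u, ‖f u‖₊ :=
        lintegral_const_mul _ (hf_cont.measurable.nnnorm.coe_nnreal_ennreal)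
      have h3 : (K : ENNReal) * (∫⁻ u, ‖f u‖₊) < ⊤ :=
        ENNReal.mul_lt_top (by simp) hf_int.2
      exact ne_of_lt (lt_of_le_of_lt h1 (h2 ▸ h3))
    have hFnonneg : ∀ (i : ℤ) (u : ℝ), 0 ≤ (Ioc (a i) (b i)).indicator f u :=
      fun i u => Set.indicator_nonneg (fun x _ => hf_nonneg x) u
    have hpind : ∀ i : ℤ, p σ i = ∫ u, (Ioc (a i) (b i)).indicator f u := by
      intro i
      rw [hstep1 i, intervalIntegral.integral_of_le (hab i),
        ← MeasureTheory.integral_indicator measurableSet_Ioc]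
    have hptoReal : ∀ i : ℤ, p σ i = (∫⁻ u, ‖(Ioc (a i) (b i)).indicator f u‖₊).toReal := by
      intro i
      rw [hpind i]
      rw [MeasureTheory.integral_eq_lintegral_of_nonneg_ae
        (Eventually.of_forall (hFnonneg i)) (hFmeas i)]
      congr 1
      apply lintegral_congr
      intro u
      exact (Real.enorm_eq_ofReal (hFnonneg i u)).symm
    have hsummable : Summable (fun i : ℤ => p σ i) :=
      (ENNReal.summable_toReal hlint).congr (fun i => (hptoReal i).symm)
    have hEc_meas : Measurable (fun u : ℝ => E (c u)) :=
      hEmeas.comp ((continuous_const.mul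
        (continuous_const.sub (continuous_const.mul continuous_id))).measurable)
    have hint2 : Integrable (fun u => f u * E (c u)) :=
      mul_bddInt hf_int hEc_meas (fun u => hEbdd _)
    have hswap : ∑' i : ℤ, p σ i = ∫ u, ∑' i : ℤ, (Ioc (a i) (b i)).indicator f u := by
      rw [tsum_congr hpind]
      exact (MeasureTheory.integral_tsum hFmeas hlint).symm
    refine ⟨hsummable, ?_⟩
    rw [hswap]
    calc ∫ u, ∑' i : ℤ, (Ioc (a i) (b i)).indicator f u
        = ∫ u, (lam * T * f u + f u * E (c u)) := by
          apply MeasureTheory.integral_congr_ae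
          filter_upwards with u
          rw [hptw u]; ring
      _ = lam * T * (∫ u, f u) + ∫ u, f u * E (c u) := by
          rw [MeasureTheory.integral_add (hf_int.const_mul _) hint2,
            MeasureTheory.integral_const_mul]
      _ = lam * T + ∫ u, f u * E (lam * (t - σ * u)) := by
          rw [hf_prob, mul_one]
  refine ⟨fun σ hσ => (main σ hσ).1, ?_⟩
  have hosc := osc hf_cont hf_nonneg hf_int hf_bdd hf_var E hEmeas hEbdd hEper hEmean lam t hlam
  have h2 : Tendsto (fun σ : ℝ => lam * T + ∫ u, f u * E (lam * (t - σ * u)))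
      atTop (nhds (lam * T)) := by
    have h3 := (tendsto_const_nhds (x := lam * T) (f := (atTop : Filter ℝ))).add hosc
    simpa using h3
  apply h2.congr'
  filter_upwards [eventually_gt_atTop 0] with σ hσ
  exact ((main σ hσ).2).symm

/-- For every `t ∈ ℝ`, `T > 0` and complex `z` with `|z| ≤ 1`,
`lim_{σ→∞} Σ_{i∈ℤ} p_i·(1 + (z-1)·p_i·∫_0^1 s/(1+(z-1)(1-s)p_i)² ds) = λT`,
where `p_i = p_i(t,t+T) = ∫_t^{t+T} (1/σ) f_ξ((x - i/λ)/σ) dx`. -/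
theorem psra_sum_log_expansion_tendsto (lam M : ℝ) (hlam : 0 < lam)
    (f : ℝ → ℝ) (hf_cont : Continuous f) (hf_nonneg : ∀ x, 0 ≤ f x)
    (hf_int : Integrable f) (hf_prob : ∫ x, f x = 1)
    (hf_bdd : ∀ x, f x ≤ M)
    (hf_var : Integrable (fun x => x ^ 2 * f x))
    (t T : ℝ) (hT : 0 < T) (z : ℂ) (hz : ‖z‖ ≤ 1)
    (p : ℝ → ℤ → ℝ)
    (hp : ∀ σ i, p σ i = ∫ x in t..(t + T), (1 / σ) * f ((x - i / lam) / σ)) :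
    Tendsto (fun σ : ℝ => ∑' i : ℤ,
        (p σ i : ℂ) * (1 + (z - 1) * (p σ i : ℂ) *
          ∫ s in (0:ℝ)..1, (s : ℂ) / (1 + (z - 1) * (1 - (s : ℂ)) * (p σ i : ℂ)) ^ 2))
      atTop (nhds ((lam * T : ℝ) : ℂ)) := by
  have hM : 0 ≤ M := le_trans (hf_nonneg 0) (hf_bdd 0)
  obtain ⟨hsum, hA⟩ := Apart lam M hlam f hf_cont hf_nonneg hf_int hf_prob hf_bdd hf_var t T hT p hp
  set σ₀ : ℝ := 1 + 4 * M * T with hσ₀def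
  have hσ₀pos : 0 < σ₀ := by positivity
  have hz1 : ‖z - 1‖ ≤ 2 := by
    calc ‖z - 1‖ ≤ ‖z‖ + ‖(1:ℂ)‖ := norm_sub_le _ _
      _ ≤ 2 := by rw [norm_one]; linarith
  -- basic bounds on p
  have hbounds : ∀ σ : ℝ, σ₀ ≤ σ → ∀ i : ℤ,
      0 ≤ p σ i ∧ p σ i ≤ M * T / σ ∧ p σ i ≤ 1/4 := by
    intro σ hσ i
    have hσpos : 0 < σ := lt_of_lt_of_le hσ₀pos hσ
    have h0 : 0 ≤ p σ i := by
      rw [hp]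
      apply intervalIntegral.integral_nonneg (by linarith)
      intro u _
      exact mul_nonneg (by positivity) (hf_nonneg _)
    have h1 : p σ i ≤ M * T / σ := by
      rw [hp]
      have h2 := intervalIntegral.norm_integral_le_of_norm_le_const (C := M/σ)
        (f := fun x => (1/σ) * f ((x - i/lam)/σ)) (a := t) (b := t + T) ?_
      · rw [Real.norm_eq_abs, show t + T - t = T by ring, abs_of_pos hT] at h2
        calc (∫ x in t..t + T, 1 / σ * f ((x - ↑i / lam) / σ))
            ≤ |∫ x in t..t + T, 1 / σ * f ((x - ↑i / lam) / σ)| := le_abs_self _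
          _ ≤ M / σ * T := h2
          _ = M * T / σ := by ring
      · intro x _
        rw [Real.norm_eq_abs, abs_mul, abs_of_pos (by positivity : (0:ℝ) < 1/σ),
          abs_of_nonneg (hf_nonneg _)]
        calc 1/σ * f ((x - ↑i/lam)/σ) ≤ 1/σ * M :=
              mul_le_mul_of_nonneg_left (hf_bdd _) (by positivity)
          _ = M/σ := by ring
    refine ⟨h0, h1, le_trans h1 ?_⟩
    rw [div_le_iff₀ hσpos]
    nlinarith [mul_nonneg hM hT.le]
  -- bound on the inner integral
  have hw : ∀ q : ℝ, 0 ≤ q → q ≤ 1/4 →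
      ‖∫ s in (0:ℝ)..1, (s:ℂ) / (1 + (z-1) * (1 - (s:ℂ)) * (q:ℂ))^2‖ ≤ 4 := by
    intro q h0 h14
    have h2 := intervalIntegral.norm_integral_le_of_norm_le_const (C := 4)
      (f := fun s : ℝ => (s:ℂ) / (1 + (z-1) * (1 - (s:ℂ)) * (q:ℂ))^2) (a := 0) (b := 1) ?_
    · simpa using h2
    · intro s hs
      rw [Set.uIoc_of_le (by norm_num : (0:ℝ) ≤ 1)] at hs
      obtain ⟨hs0, hs1⟩ := hs
      set w : ℂ := (z-1) * (1 - (s:ℂ)) * (q:ℂ) with hwdef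
      have hq : ‖w‖ ≤ 1/2 := by
        rw [hwdef, norm_mul, norm_mul]
        have h1 : ‖(1 - (s:ℂ))‖ ≤ 1 := by
          rw [show (1 - (s:ℂ)) = ((1 - s : ℝ) : ℂ) by push_cast; ring, Complex.norm_real,
            Real.norm_eq_abs, abs_of_nonneg (by linarith)]
          linarith
        have h2 : ‖(q:ℂ)‖ = q := by
          rw [Complex.norm_real, Real.norm_eq_abs, abs_of_nonneg h0]
        rw [h2]
        calc ‖z-1‖ * ‖1-(s:ℂ)‖ * q ≤ 2 * 1 * (1/4) := by
              apply mul_le_mul (mul_le_mul hz1 h1 (norm_nonneg _) (by norm_num)) h14 h0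
              norm_num
          _ = 1/2 := by norm_num
      have hden : 1/2 ≤ ‖1 + w‖ := by
        have h3 : ‖(1:ℂ)‖ ≤ ‖1 + w‖ + ‖w‖ := by
          calc ‖(1:ℂ)‖ = ‖(1 + w) - w‖ := by ring_nf
            _ ≤ ‖1 + w‖ + ‖w‖ := norm_sub_le _ _
        rw [norm_one] at h3
        linarith
      rw [norm_div, norm_pow]
      have hnum : ‖(s:ℂ)‖ ≤ 1 := by
        rw [Complex.norm_real, Real.norm_eq_abs, abs_of_nonneg hs0.le]
        exact hs1
      calc ‖(s:ℂ)‖ / ‖1 + w‖^2 ≤ 1 / (1/2)^2 := by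
            apply div_le_div₀ (by norm_num) hnum (by norm_num)
            exact pow_le_pow_left₀ (by norm_num) hden 2
        _ = 4 := by norm_num
  -- summabilities and termwise decomposition for σ ≥ σ₀
  set q : ℝ → ℤ → ℂ := fun σ i => (z-1) * (p σ i : ℂ)^2 *
    ∫ s in (0:ℝ)..1, (s:ℂ) / (1 + (z-1) * (1 - (s:ℂ)) * (p σ i : ℂ))^2 with hqdef
  have hfacts : ∀ σ : ℝ, σ₀ ≤ σ →
      (∑' i : ℤ, (p σ i : ℂ) * (1 + (z - 1) * (p σ i : ℂ) *
          ∫ s in (0:ℝ)..1, (s : ℂ) / (1 + (z - 1) * (1 - (s : ℂ)) * (p σ i : ℂ)) ^ 2))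
        = ((∑' i : ℤ, p σ i : ℝ) : ℂ) + ∑' i : ℤ, q σ i
      ∧ ‖∑' i : ℤ, q σ i‖ ≤ 8 * M * T / σ * (∑' i : ℤ, p σ i) := by
    intro σ hσ
    have hσpos : 0 < σ := lt_of_lt_of_le hσ₀pos hσ
    have hb := hbounds σ hσ
    have hsR : Summable (fun i : ℤ => p σ i) := hsum σ hσpos
    have hsC : Summable (fun i : ℤ => (p σ i : ℂ)) := by
      apply Summable.of_norm
      apply hsR.congr
      intro i
      rw [Complex.norm_real, Real.norm_eq_abs, abs_of_nonneg (hb i).1]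
    have hqbound : ∀ i : ℤ, ‖q σ i‖ ≤ 8 * (M * T / σ) * p σ i := by
      intro i
      obtain ⟨h0, h1, h14⟩ := hb i
      rw [hqdef]
      dsimp only
      rw [norm_mul, norm_mul, norm_pow, Complex.norm_real, Real.norm_eq_abs,
        abs_of_nonneg h0]
      calc ‖z-1‖ * (p σ i)^2 * ‖∫ s in (0:ℝ)..1, (s:ℂ) / (1 + (z-1)*(1-(s:ℂ))*((p σ i:ℝ):ℂ))^2‖
          ≤ 2 * (p σ i)^2 * 4 := by
            apply mul_le_mul ?_ (hw (p σ i) h0 h14) (norm_nonneg _) (by positivity)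
            exact mul_le_mul_of_nonneg_right hz1 (by positivity)
        _ = 8 * (p σ i * p σ i) := by ring
        _ ≤ 8 * ((M * T / σ) * p σ i) := by
            apply mul_le_mul_of_nonneg_left (mul_le_mul_of_nonneg_right h1 h0) (by norm_num)
        _ = 8 * (M * T / σ) * p σ i := by ring
    have hq2 : ∀ i : ℤ, ‖q σ i‖ ≤ 2 * p σ i := by
      intro i
      obtain ⟨h0, h1, h14⟩ := hb i
      calc ‖q σ i‖ ≤ 8 * (M * T / σ) * p σ i := hqbound i
        _ ≤ 2 * p σ i := by
            have hd : M * T / σ ≤ 1/4 := by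
              rw [div_le_iff₀ hσpos]; nlinarith [mul_nonneg hM hT.le]
            nlinarith [hd, h0]
    have hqS : Summable (fun i : ℤ => q σ i) :=
      Summable.of_norm_bounded (hsR.mul_left 2) hq2
    have hqnS : Summable (fun i : ℤ => ‖q σ i‖) :=
      Summable.of_nonneg_of_le (fun i => norm_nonneg _) hq2 (hsR.mul_left 2)
    constructor
    · have hterm : ∀ i : ℤ, (p σ i : ℂ) * (1 + (z - 1) * (p σ i : ℂ) *
          ∫ s in (0:ℝ)..1, (s : ℂ) / (1 + (z - 1) * (1 - (s : ℂ)) * (p σ i : ℂ)) ^ 2)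
          = (p σ i : ℂ) + q σ i := by
        intro i; rw [hqdef]; dsimp only; ring
      rw [tsum_congr hterm, Summable.tsum_add hsC hqS, Complex.ofReal_tsum]
    · calc ‖∑' i : ℤ, q σ i‖ ≤ ∑' i : ℤ, ‖q σ i‖ := norm_tsum_le_tsum_norm hqnS
        _ ≤ ∑' i : ℤ, 8 * (M * T / σ) * p σ i :=
            Summable.tsum_le_tsum hqbound hqnS (hsR.mul_left _)
        _ = 8 * (M * T / σ) * ∑' i : ℤ, p σ i := tsum_mul_left
        _ = 8 * M * T / σ * (∑' i : ℤ, p σ i) := by ring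
  -- final assembly
  have hAC : Tendsto (fun σ : ℝ => ((∑' i : ℤ, p σ i : ℝ) : ℂ)) atTop (nhds ((lam*T:ℝ):ℂ)) :=
    (Complex.continuous_ofReal.tendsto _).comp hA
  have hg : Tendsto (fun σ : ℝ => 8 * M * T / σ * (∑' i : ℤ, p σ i)) atTop (nhds 0) := by
    have h1 : Tendsto (fun σ : ℝ => 8 * M * T / σ) atTop (nhds 0) :=
      tendsto_const_nhds.div_atTop tendsto_id
    have h2 := h1.mul hA
    simpa using h2
  have hQ : Tendsto (fun σ : ℝ => ∑' i : ℤ, q σ i) atTop (nhds 0) := by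
    apply squeeze_zero_norm' ?_ hg
    filter_upwards [eventually_ge_atTop σ₀] with σ hσ
    exact (hfacts σ hσ).2
  have hsumT := hAC.add hQ
  rw [add_zero] at hsumT
  apply Tendsto.congr' ?_ hsumT
  filter_upwards [eventually_ge_atTop σ₀] with σ hσ
  exact ((hfacts σ hσ).1).symm
end

section
/- Let n₁ = n(t,t+T) and n₂ = n(t+T,t+2T) be the numbers of PSRA arrivals in the consecutive slots (t,t+T] and (t+T,t+2T]. Then Cov(n₁,n₂) = -Σ_{i∈ℤ} p_i(t,t+T)·p_i(t+T,t+2T) ≤ 0; in particular the numbers of PSRA arrivals in disjoint consecutive time slots are negatively correlated. -/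
open MeasureTheory ProbabilityTheory

lemma psra_count_aux {lam T : ℝ} (hlam : 0 < lam) (hT : 0 < T) (t x : ℝ) :
    ∑' i : ℤ, (Set.Ioc (t - (i : ℝ) / lam) (t + T - (i : ℝ) / lam)).indicator
      (fun _ => (1 : ENNReal)) x ≤ ENNReal.ofReal (lam * T + 1) := by
  classical
  set F : Finset ℤ := Finset.Icc (⌊lam * (t - x)⌋ + 1) ⌊lam * (t + T - x)⌋ with hF
  have hsupp : ∀ i : ℤ, i ∉ F →
      (Set.Ioc (t - (i : ℝ) / lam) (t + T - (i : ℝ) / lam)).indicator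
        (fun _ => (1 : ENNReal)) x = 0 := by
    intro i hi
    rw [Set.indicator_apply_eq_zero]
    intro hx
    exfalso
    apply hi
    obtain ⟨h1, h2⟩ := hx
    have hlow : lam * (t - x) < (i : ℝ) := by
      have h : t - x < (i : ℝ) / lam := by linarith
      calc lam * (t - x) = (t - x) * lam := by ring
        _ < ((i : ℝ) / lam) * lam := mul_lt_mul_of_pos_right h hlam
        _ = (i : ℝ) := by field_simp
    have hhigh : (i : ℝ) ≤ lam * (t + T - x) := by
      have : (i : ℝ) / lam ≤ t + T - x := by linarith
      calc (i : ℝ) = ((i : ℝ) / lam) * lam := by field_simp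
        _ ≤ (t + T - x) * lam := mul_le_mul_of_nonneg_right this hlam.le
        _ = lam * (t + T - x) := by ring
    simp only [hF, Finset.mem_Icc]
    exact ⟨Int.add_one_le_iff.mpr (Int.floor_lt.mpr hlow), Int.le_floor.mpr hhigh⟩
  rw [tsum_eq_sum hsupp]
  have hle1 : ∀ i ∈ F, (Set.Ioc (t - (i : ℝ) / lam) (t + T - (i : ℝ) / lam)).indicator
      (fun _ => (1 : ENNReal)) x ≤ 1 := by
    intro i _
    exact Set.indicator_apply_le' (fun _ => le_rfl) (fun _ => zero_le)
  calc ∑ i ∈ F, (Set.Ioc (t - (i : ℝ) / lam) (t + T - (i : ℝ) / lam)).indicator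
        (fun _ => (1 : ENNReal)) x
      ≤ ∑ _i ∈ F, (1 : ENNReal) := Finset.sum_le_sum hle1
    _ = (F.card : ENNReal) := by simp
    _ ≤ ENNReal.ofReal (lam * T + 1) := by
        rw [show ((F.card : ENNReal)) = ENNReal.ofReal (F.card : ℝ) by
          rw [ENNReal.ofReal_natCast]]
        apply ENNReal.ofReal_le_ofReal
        have hcard : F.card = (⌊lam * (t + T - x)⌋ + 1 - (⌊lam * (t - x)⌋ + 1)).toNat := by
          rw [hF, Int.card_Icc]
        rw [hcard]
        have h1 : (⌊lam * (t + T - x)⌋ : ℝ) ≤ lam * (t + T - x) := Int.floor_le _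
        have h2 : lam * (t - x) - 1 < (⌊lam * (t - x)⌋ : ℝ) := Int.sub_one_lt_floor _
        rcases le_or_gt (⌊lam * (t + T - x)⌋ + 1 - (⌊lam * (t - x)⌋ + 1)) 0 with h | h
        · rw [Int.toNat_of_nonpos h]
          push_cast
          nlinarith
        · have := Int.toNat_of_nonneg h.le
          have hc : ((⌊lam * (t + T - x)⌋ + 1 - (⌊lam * (t - x)⌋ + 1)).toNat : ℝ)
              = (⌊lam * (t + T - x)⌋ : ℝ) + 1 - ((⌊lam * (t - x)⌋ : ℝ) + 1) := by
            rw [← Int.cast_natCast, this]; push_cast; ring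
          rw [hc]
          nlinarith

lemma psra_density_Ioc {σ : ℝ} (hσ : 0 < σ) (f : ℝ → ℝ) (hf_cont : Continuous f)
    (hf_nonneg : ∀ x, 0 ≤ f x) {a b : ℝ} (hab : a ≤ b) :
    ((volume.withDensity fun x => ENNReal.ofReal ((1 / σ) * f (x / σ))) (Set.Ioc a b)).toReal
      = ∫ x in a..b, (1 / σ) * f (x / σ) := by
  have hg_cont : Continuous fun x => (1 / σ) * f (x / σ) :=
    continuous_const.mul (hf_cont.comp (continuous_id.div_const σ))
  have hint : IntegrableOn (fun x => (1 / σ) * f (x / σ)) (Set.Ioc a b) :=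
    hg_cont.integrableOn_Ioc
  rw [withDensity_apply _ measurableSet_Ioc,
    ← ofReal_integral_eq_lintegral_ofReal hint
      (Filter.Eventually.of_forall fun x => mul_nonneg (by positivity) (hf_nonneg _)),
    ENNReal.toReal_ofReal
      (setIntegral_nonneg measurableSet_Ioc fun x _ => mul_nonneg (by positivity) (hf_nonneg _)),
    intervalIntegral.integral_of_le hab]

set_option maxHeartbeats 1000000 in
/-- Let `n₁ = n(t,t+T)` and `n₂ = n(t+T,t+2T)` be the numbers of PSRA
arrivals (`t_i = i/λ + ξ_i`, `ξ_i` independent with density `(1/σ) f_ξ(·/σ)`) in the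
consecutive slots `(t,t+T]` and `(t+T,t+2T]`. Then
`Cov(n₁,n₂) = -Σ_{i∈ℤ} p_i(t,t+T)·p_i(t+T,t+2T) ≤ 0`: the numbers of arrivals in
disjoint consecutive time slots are negatively correlated. -/
theorem psra_negative_covariance {Ω : Type*} [MeasurableSpace Ω]
    (P : Measure Ω) [IsProbabilityMeasure P]
    (lam σ M : ℝ) (hlam : 0 < lam) (hσ : 0 < σ)
    (f : ℝ → ℝ) (hf_cont : Continuous f) (hf_nonneg : ∀ x, 0 ≤ f x)
    (hf_int : Integrable f) (hf_prob : ∫ x, f x = 1) (hf_bdd : ∀ x, f x ≤ M)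
    (ξ : ℤ → Ω → ℝ) (hmeas : ∀ i, Measurable (ξ i))
    (hindep : iIndepFun ξ P)
    (hlaw : ∀ i : ℤ, P.map (ξ i) =
      volume.withDensity (fun x => ENNReal.ofReal ((1 / σ) * f (x / σ))))
    (t T : ℝ) (hT : 0 < T)
    (p₁ p₂ : ℤ → ℝ)
    (hp₁ : ∀ i, p₁ i = ∫ x in t..(t + T), (1 / σ) * f ((x - i / lam) / σ))
    (hp₂ : ∀ i, p₂ i = ∫ x in (t + T)..(t + 2 * T), (1 / σ) * f ((x - i / lam) / σ))
    (N₁ N₂ : Ω → ℝ)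
    (hN₁ : ∀ ω, N₁ ω = ∑' i : ℤ,
      Set.indicator (Set.Ioc t (t + T)) (fun _ => (1 : ℝ)) ((i : ℝ) / lam + ξ i ω))
    (hN₂ : ∀ ω, N₂ ω = ∑' i : ℤ,
      Set.indicator (Set.Ioc (t + T) (t + 2 * T)) (fun _ => (1 : ℝ)) ((i : ℝ) / lam + ξ i ω)) :
    (∫ ω, N₁ ω * N₂ ω ∂P) - (∫ ω, N₁ ω ∂P) * (∫ ω, N₂ ω ∂P) =
      -∑' i : ℤ, p₁ i * p₂ i ∧
    (∫ ω, N₁ ω * N₂ ω ∂P) - (∫ ω, N₁ ω ∂P) * (∫ ω, N₂ ω ∂P) ≤ 0 := by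
  classical
  set ν : Measure ℝ :=
    volume.withDensity (fun x => ENNReal.ofReal ((1 / σ) * f (x / σ))) with hν
  set s₁ : ℤ → Set ℝ :=
    fun i => Set.Ioc (t - (i : ℝ) / lam) (t + T - (i : ℝ) / lam) with hs₁
  set s₂ : ℤ → Set ℝ :=
    fun i => Set.Ioc (t + T - (i : ℝ) / lam) (t + 2 * T - (i : ℝ) / lam) with hs₂
  have hs₁m : ∀ i, MeasurableSet (s₁ i) := fun i => measurableSet_Ioc
  have hs₂m : ∀ i, MeasurableSet (s₂ i) := fun i => measurableSet_Ioc
  set E₁ : ℤ → Set Ω := fun i => ξ i ⁻¹' s₁ i with hE₁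
  set E₂ : ℤ → Set Ω := fun i => ξ i ⁻¹' s₂ i with hE₂
  have hE₁m : ∀ i, MeasurableSet (E₁ i) := fun i => (hmeas i) (hs₁m i)
  have hE₂m : ∀ i, MeasurableSet (E₂ i) := fun i => (hmeas i) (hs₂m i)
  set q₁ : ℤ → Ω → ℝ := fun i => (E₁ i).indicator (fun _ => 1) with hq₁
  set q₂ : ℤ → Ω → ℝ := fun i => (E₂ i).indicator (fun _ => 1) with hq₂
  have hq₁meas : ∀ i, Measurable (q₁ i) := fun i => measurable_const.indicator (hE₁m i)
  have hq₂meas : ∀ i, Measurable (q₂ i) := fun i => measurable_const.indicator (hE₂m i)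
  -- pointwise rewriting of the indicators in N₁, N₂
  have hN₁' : ∀ ω, N₁ ω = ∑' i : ℤ, q₁ i ω := by
    intro ω
    rw [hN₁ ω]
    refine tsum_congr fun i => ?_
    have hiff : ((i : ℝ) / lam + ξ i ω ∈ Set.Ioc t (t + T)) ↔ ω ∈ E₁ i := by
      simp only [hE₁, hs₁, Set.mem_preimage, Set.mem_Ioc]
      constructor <;> rintro ⟨h1, h2⟩ <;> exact ⟨by linarith, by linarith⟩
    simp only [Set.indicator_apply, hq₁]
    exact if_congr hiff rfl rfl
  have hN₂' : ∀ ω, N₂ ω = ∑' i : ℤ, q₂ i ω := by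
    intro ω
    rw [hN₂ ω]
    refine tsum_congr fun i => ?_
    have hiff : ((i : ℝ) / lam + ξ i ω ∈ Set.Ioc (t + T) (t + 2 * T)) ↔ ω ∈ E₂ i := by
      simp only [hE₂, hs₂, Set.mem_preimage, Set.mem_Ioc]
      constructor <;> rintro ⟨h1, h2⟩ <;> exact ⟨by linarith, by linarith⟩
    simp only [Set.indicator_apply, hq₂]
    exact if_congr hiff rfl rfl
  -- basic measure facts
  have hmap : ∀ (i : ℤ) (s : Set ℝ), MeasurableSet s → P (ξ i ⁻¹' s) = ν s := by
    intro i s hs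
    rw [← Measure.map_apply (hmeas i) hs, hlaw i]
  have hν_univ : ν Set.univ = 1 := by
    rw [← hlaw 0, Measure.map_apply (hmeas 0) MeasurableSet.univ]
    simp
  -- probabilities p₁, p₂ as ν-measures
  have hp₁' : ∀ i, p₁ i = (ν (s₁ i)).toReal := by
    intro i
    rw [hp₁ i]
    have key : (∫ x in t..(t + T), (1 / σ) * f ((x - (i : ℝ) / lam) / σ))
        = ∫ x in (t - (i : ℝ) / lam)..(t + T - (i : ℝ) / lam), (1 / σ) * f (x / σ) :=
      intervalIntegral.integral_comp_sub_right (fun y => (1 / σ) * f (y / σ)) _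
    rw [key, hs₁, ← psra_density_Ioc hσ f hf_cont hf_nonneg (by linarith : t - (i : ℝ) / lam ≤ t + T - (i : ℝ) / lam)]
  have hp₂' : ∀ i, p₂ i = (ν (s₂ i)).toReal := by
    intro i
    rw [hp₂ i]
    have key : (∫ x in (t + T)..(t + 2 * T), (1 / σ) * f ((x - (i : ℝ) / lam) / σ))
        = ∫ x in (t + T - (i : ℝ) / lam)..(t + 2 * T - (i : ℝ) / lam), (1 / σ) * f (x / σ) :=
      intervalIntegral.integral_comp_sub_right (fun y => (1 / σ) * f (y / σ)) _
    rw [key, hs₂, ← psra_density_Ioc hσ f hf_cont hf_nonneg (by linarith : t + T - (i : ℝ) / lam ≤ t + 2 * T - (i : ℝ) / lam)]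
  -- the ENNReal-valued masses and their summability
  have hS₁ : ∑' i : ℤ, ν (s₁ i) ≤ ENNReal.ofReal (lam * T + 1) := by
    have heq : ∀ i : ℤ, ν (s₁ i) = ∫⁻ x, (s₁ i).indicator (fun _ => 1) x ∂ν := by
      intro i
      rw [lintegral_indicator (hs₁m i), setLIntegral_one]
    calc ∑' i : ℤ, ν (s₁ i)
        = ∫⁻ x, ∑' i : ℤ, (s₁ i).indicator (fun _ => (1 : ENNReal)) x ∂ν := by
          rw [lintegral_tsum fun i => (measurable_const.indicator (hs₁m i)).aemeasurable]
          exact tsum_congr heq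
      _ ≤ ∫⁻ _x, ENNReal.ofReal (lam * T + 1) ∂ν :=
          lintegral_mono fun x => psra_count_aux hlam hT t x
      _ = ENNReal.ofReal (lam * T + 1) := by rw [lintegral_const, hν_univ, mul_one]
  have hS₂ : ∑' i : ℤ, ν (s₂ i) ≤ ENNReal.ofReal (lam * T + 1) := by
    have hs₂' : ∀ i : ℤ, s₂ i
        = Set.Ioc ((t + T) - (i : ℝ) / lam) ((t + T) + T - (i : ℝ) / lam) := by
      intro i
      rw [hs₂]
      dsimp only
      rw [show t + 2 * T - (i : ℝ) / lam = (t + T) + T - (i : ℝ) / lam by ring]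
    have heq : ∀ i : ℤ, ν (s₂ i) = ∫⁻ x, (s₂ i).indicator (fun _ => 1) x ∂ν := by
      intro i
      rw [lintegral_indicator (hs₂m i), setLIntegral_one]
    calc ∑' i : ℤ, ν (s₂ i)
        = ∫⁻ x, ∑' i : ℤ, (s₂ i).indicator (fun _ => (1 : ENNReal)) x ∂ν := by
          rw [lintegral_tsum fun i => (measurable_const.indicator (hs₂m i)).aemeasurable]
          exact tsum_congr heq
      _ ≤ ∫⁻ _x, ENNReal.ofReal (lam * T + 1) ∂ν := by
          refine lintegral_mono fun x => ?_
          have := psra_count_aux hlam hT (t + T) x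
          simp only [← hs₂'] at this
          exact this
      _ = ENNReal.ofReal (lam * T + 1) := by rw [lintegral_const, hν_univ, mul_one]
  have hS₁ne : ∑' i : ℤ, ν (s₁ i) ≠ ⊤ := (hS₁.trans_lt ENNReal.ofReal_lt_top).ne
  have hS₂ne : ∑' i : ℤ, ν (s₂ i) ≠ ⊤ := (hS₂.trans_lt ENNReal.ofReal_lt_top).ne
  have hsum_p₁ : Summable p₁ := by
    have h := ENNReal.summable_toReal hS₁ne
    have : p₁ = fun i => (ν (s₁ i)).toReal := funext hp₁'
    rw [this]; exact h
  have hsum_p₂ : Summable p₂ := by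
    have h := ENNReal.summable_toReal hS₂ne
    have : p₂ = fun i => (ν (s₂ i)).toReal := funext hp₂'
    rw [this]; exact h
  have hp₁nn : ∀ i, 0 ≤ p₁ i := fun i => (hp₁' i) ▸ ENNReal.toReal_nonneg
  have hp₂nn : ∀ i, 0 ≤ p₂ i := fun i => (hp₂' i) ▸ ENNReal.toReal_nonneg
  -- lintegrals of q's
  have hlq₁ : ∀ i, ∫⁻ ω, (‖q₁ i ω‖₊ : ENNReal) ∂P = ν (s₁ i) := by
    intro i
    have hptw : (fun ω => (‖q₁ i ω‖₊ : ENNReal)) = (E₁ i).indicator (fun _ => 1) := by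
      funext ω
      simp only [hq₁, Set.indicator_apply]
      split_ifs <;> simp
    rw [hptw, lintegral_indicator (hE₁m i), setLIntegral_one, hE₁]
    exact hmap i _ (hs₁m i)
  have hlq₂ : ∀ i, ∫⁻ ω, (‖q₂ i ω‖₊ : ENNReal) ∂P = ν (s₂ i) := by
    intro i
    have hptw : (fun ω => (‖q₂ i ω‖₊ : ENNReal)) = (E₂ i).indicator (fun _ => 1) := by
      funext ω
      simp only [hq₂, Set.indicator_apply]
      split_ifs <;> simp
    rw [hptw, lintegral_indicator (hE₂m i), setLIntegral_one, hE₂]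
    exact hmap i _ (hs₂m i)
  -- integrals of q's
  have hiq₁ : ∀ i, ∫ ω, q₁ i ω ∂P = p₁ i := by
    intro i
    rw [hq₁]
    rw [integral_indicator_const (1 : ℝ) (hE₁m i), smul_eq_mul, mul_one, hE₁, measureReal_def,
      hmap i _ (hs₁m i), ← hp₁' i]
  have hiq₂ : ∀ i, ∫ ω, q₂ i ω ∂P = p₂ i := by
    intro i
    rw [hq₂]
    rw [integral_indicator_const (1 : ℝ) (hE₂m i), smul_eq_mul, mul_one, hE₂, measureReal_def,
      hmap i _ (hs₂m i), ← hp₂' i]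
  -- expectations of N₁, N₂
  have hEN₁ : ∫ ω, N₁ ω ∂P = ∑' i : ℤ, p₁ i := by
    have hfe : N₁ = fun ω => ∑' i : ℤ, q₁ i ω := funext hN₁'
    rw [hfe, integral_tsum (fun i => (hq₁meas i).aestronglyMeasurable)
      (by simp only [enorm_eq_nnnorm, hlq₁]; exact hS₁ne)]
    exact tsum_congr hiq₁
  have hEN₂ : ∫ ω, N₂ ω ∂P = ∑' i : ℤ, p₂ i := by
    have hfe : N₂ = fun ω => ∑' i : ℤ, q₂ i ω := funext hN₂'
    rw [hfe, integral_tsum (fun i => (hq₂meas i).aestronglyMeasurable)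
      (by simp only [enorm_eq_nnnorm, hlq₂]; exact hS₂ne)]
    exact tsum_congr hiq₂
  -- a.e. summability of the indicator families
  have hae₁ : ∀ᵐ ω ∂P, Summable fun i : ℤ => q₁ i ω := by
    have hfin : ∫⁻ ω, ∑' i : ℤ, (‖q₁ i ω‖₊ : ENNReal) ∂P ≠ ⊤ := by
      rw [lintegral_tsum fun i => ((hq₁meas i).nnnorm.coe_nnreal_ennreal).aemeasurable]
      simp only [hlq₁]; exact hS₁ne
    filter_upwards [ae_lt_top' (AEMeasurable.ennreal_tsum fun i =>
      ((hq₁meas i).nnnorm.coe_nnreal_ennreal).aemeasurable) hfin] with ω hω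
    exact Summable.of_nnnorm (ENNReal.tsum_coe_ne_top_iff_summable.mp hω.ne)
  have hae₂ : ∀ᵐ ω ∂P, Summable fun i : ℤ => q₂ i ω := by
    have hfin : ∫⁻ ω, ∑' i : ℤ, (‖q₂ i ω‖₊ : ENNReal) ∂P ≠ ⊤ := by
      rw [lintegral_tsum fun i => ((hq₂meas i).nnnorm.coe_nnreal_ennreal).aemeasurable]
      simp only [hlq₂]; exact hS₂ne
    filter_upwards [ae_lt_top' (AEMeasurable.ennreal_tsum fun i =>
      ((hq₂meas i).nnnorm.coe_nnreal_ennreal).aemeasurable) hfin] with ω hω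
    exact Summable.of_nnnorm (ENNReal.tsum_coe_ne_top_iff_summable.mp hω.ne)
  -- the product family
  set G : ℤ × ℤ → Ω → ℝ := fun z ω => q₁ z.1 ω * q₂ z.2 ω with hG
  have hGmeas : ∀ z, Measurable (G z) := fun z => (hq₁meas z.1).mul (hq₂meas z.2)
  have hGind : ∀ z : ℤ × ℤ, G z = (E₁ z.1 ∩ E₂ z.2).indicator (fun _ => (1 : ℝ)) := by
    intro z
    funext ω
    simp only [hG, hq₁, hq₂, Set.indicator_apply, Set.mem_inter_iff]
    by_cases h1 : ω ∈ E₁ z.1 <;> by_cases h2 : ω ∈ E₂ z.2 <;> simp [h1, h2]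
  have hPinter : ∀ z : ℤ × ℤ, P (E₁ z.1 ∩ E₂ z.2)
      = if z.1 = z.2 then 0 else ν (s₁ z.1) * ν (s₂ z.2) := by
    rintro ⟨i, j⟩
    by_cases hij : i = j
    · subst hij
      simp only [if_pos rfl]
      have hdisj : E₁ i ∩ E₂ i = ∅ := by
        ext ω
        simp only [hE₁, hE₂, hs₁, hs₂, Set.mem_inter_iff, Set.mem_preimage, Set.mem_Ioc,
          Set.mem_empty_iff_false, iff_false]
        rintro ⟨⟨ha1, ha2⟩, hb1, hb2⟩
        linarith
      rw [hdisj, measure_empty]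
      simp
    · simp only [if_neg hij]
      have hind : IndepFun (ξ i) (ξ j) P := hindep.indepFun hij
      rw [hE₁, hE₂,
        hind.measure_inter_preimage_eq_mul _ _ (hs₁m i) (hs₂m j),
        hmap i _ (hs₁m i), hmap j _ (hs₂m j)]
  have hlG : ∀ z : ℤ × ℤ, ∫⁻ ω, (‖G z ω‖₊ : ENNReal) ∂P = P (E₁ z.1 ∩ E₂ z.2) := by
    intro z
    have hptw : (fun ω => (‖G z ω‖₊ : ENNReal))
        = (E₁ z.1 ∩ E₂ z.2).indicator (fun _ => 1) := by
      funext ω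
      rw [hGind z]
      simp only [Set.indicator_apply]
      split_ifs <;> simp
    rw [hptw, lintegral_indicator ((hE₁m z.1).inter (hE₂m z.2)), setLIntegral_one]
  have hiG : ∀ z : ℤ × ℤ, ∫ ω, G z ω ∂P
      = if z.1 = z.2 then 0 else p₁ z.1 * p₂ z.2 := by
    intro z
    rw [hGind z, integral_indicator_const (1 : ℝ) ((hE₁m z.1).inter (hE₂m z.2)),
      smul_eq_mul, mul_one, measureReal_def, hPinter z]
    split_ifs with h
    · simp
    · rw [ENNReal.toReal_mul, ← hp₁', ← hp₂']
  have hGsum : ∑' z : ℤ × ℤ, ∫⁻ ω, (‖G z ω‖₊ : ENNReal) ∂P ≠ ⊤ := by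
    have hle : ∀ z : ℤ × ℤ, ∫⁻ ω, (‖G z ω‖₊ : ENNReal) ∂P ≤ ν (s₁ z.1) * ν (s₂ z.2) := by
      intro z
      rw [hlG z, hPinter z]
      split_ifs
      · exact zero_le
      · exact le_rfl
    have hprod : ∑' z : ℤ × ℤ, ν (s₁ z.1) * ν (s₂ z.2)
        = (∑' i : ℤ, ν (s₁ i)) * ∑' i : ℤ, ν (s₂ i) := by
      rw [ENNReal.tsum_prod']
      simp_rw [ENNReal.tsum_mul_left]
      rw [ENNReal.tsum_mul_right]
    refine ne_top_of_le_ne_top ?_ (ENNReal.tsum_le_tsum hle)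
    rw [hprod]
    exact ENNReal.mul_ne_top hS₁ne hS₂ne
  -- expectation of the product
  have hEN₁₂ : ∫ ω, N₁ ω * N₂ ω ∂P
      = ∑' z : ℤ × ℤ, (if z.1 = z.2 then 0 else p₁ z.1 * p₂ z.2) := by
    have haeq : (fun ω => N₁ ω * N₂ ω) =ᵐ[P] fun ω => ∑' z : ℤ × ℤ, G z ω := by
      filter_upwards [hae₁, hae₂] with ω h1 h2
      rw [hN₁' ω, hN₂' ω]
      exact Summable.tsum_mul_tsum h1 h2
        (h1.mul_of_nonneg h2
          (fun i => Set.indicator_nonneg (fun _ _ => zero_le_one) ω)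
          (fun i => Set.indicator_nonneg (fun _ _ => zero_le_one) ω))
    rw [integral_congr_ae haeq,
      integral_tsum (fun z => (hGmeas z).aestronglyMeasurable) hGsum]
    exact tsum_congr hiG
  -- final algebra
  set a : ℤ × ℤ → ℝ := fun z => p₁ z.1 * p₂ z.2 with ha
  set d : ℤ × ℤ → ℝ := fun z => if z.1 = z.2 then a z else 0 with hd
  have hsa : Summable a := hsum_p₁.mul_of_nonneg hsum_p₂ hp₁nn hp₂nn
  have hsd : Summable d := by
    refine hsa.of_nonneg_of_le (fun z => ?_) (fun z => ?_)
    · rw [hd]; dsimp only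
      split_ifs
      · exact mul_nonneg (hp₁nn _) (hp₂nn _)
      · exact le_rfl
    · rw [hd, ha]; dsimp only
      split_ifs
      · exact le_rfl
      · exact mul_nonneg (hp₁nn _) (hp₂nn _)
  have hoff : ∀ z : ℤ × ℤ, (if z.1 = z.2 then (0 : ℝ) else p₁ z.1 * p₂ z.2)
      = a z - d z := by
    intro z
    rw [ha, hd]; dsimp only
    split_ifs <;> ring
  have hd_diag : ∑' z : ℤ × ℤ, d z = ∑' i : ℤ, p₁ i * p₂ i := by
    have hinj : Function.Injective fun i : ℤ => ((i, i) : ℤ × ℤ) := by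
      intro i j h
      exact (Prod.ext_iff.mp h).1
    have hsupp : Function.support d ⊆ Set.range fun i : ℤ => ((i, i) : ℤ × ℤ) := by
      intro z hz
      by_cases h : z.1 = z.2
      · exact ⟨z.1, by rw [Prod.ext_iff]; exact ⟨rfl, h⟩⟩
      · exfalso; apply hz; rw [hd]; dsimp only; rw [if_neg h]
    rw [← Function.Injective.tsum_eq hinj hsupp]
    refine tsum_congr fun i => ?_
    simp [hd, ha]
  have hprod_real : (∑' i : ℤ, p₁ i) * (∑' i : ℤ, p₂ i) = ∑' z : ℤ × ℤ, a z :=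
    Summable.tsum_mul_tsum hsum_p₁ hsum_p₂ hsa
  have hEN₁₂' : ∫ ω, N₁ ω * N₂ ω ∂P = (∑' z : ℤ × ℤ, a z) - ∑' z : ℤ × ℤ, d z := by
    rw [hEN₁₂]
    rw [tsum_congr hoff]
    exact Summable.tsum_sub hsa hsd
  have hkey : (∫ ω, N₁ ω * N₂ ω ∂P) - (∫ ω, N₁ ω ∂P) * (∫ ω, N₂ ω ∂P)
      = -∑' i : ℤ, p₁ i * p₂ i := by
    rw [hEN₁₂', hEN₁, hEN₂, hprod_real, ← hd_diag]
    ring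
  refine ⟨hkey, ?_⟩
  rw [hkey]
  exact neg_nonpos.mpr (tsum_nonneg fun i => mul_nonneg (hp₁nn i) (hp₂nn i))
end
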